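/- arXiv:1407.7771 — 6 statements merged into one kernel-verified Lean document; each statement's English description precedes it below -/
import Mathlib

section
/- Diophantine property of the strong unstable direction (generalized Liouville theorem, as used in the proof of the Main Theorem). Let A ∈ M₃(ℤ) have characteristic polynomial irreducible over ℚ, let λ ∈ ℝ be an eigenvalue of A, and let β₁, β₂ ∈ ℝ be such that (β₁, β₂, 1) is an eigenvector of A for λ. Then there exists c > 0 such that for all (p₁, p₂) ∈ ℤ² \ {(0,0)} and all q ∈ ℤ one has |p₁β₁ + p₂β₂ − q| > c / (max(|p₁|, |p₂|))². -/
set_option maxHeartbeats 1000000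

open Matrix Polynomial


lemma det3_bound (a b c : Fin 3 → ℝ) (x y z : ℝ)
    (ha : ∀ i, |a i| ≤ x) (hb : ∀ i, |b i| ≤ y) (hc : ∀ i, |c i| ≤ z) :
    |(Matrix.of ![a, b, c]).det| ≤ 6 * (x * y * z) := by
  have hx : (0:ℝ) ≤ x := (abs_nonneg _).trans (ha 0)
  have hy : (0:ℝ) ≤ y := (abs_nonneg _).trans (hb 0)
  have hz : (0:ℝ) ≤ z := (abs_nonneg _).trans (hc 0)
  have key : ∀ i j k, |a i * b j * c k| ≤ x * y * z := by
    intro i j k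
    rw [abs_mul, abs_mul]
    exact mul_le_mul (mul_le_mul (ha i) (hb j) (abs_nonneg _) hx) (hc k) (abs_nonneg _)
      (mul_nonneg hx hy)
  have e : (Matrix.of ![a, b, c]).det =
      a 0 * b 1 * c 2 - a 0 * b 2 * c 1 - a 1 * b 0 * c 2
      + a 1 * b 2 * c 0 + a 2 * b 0 * c 1 - a 2 * b 1 * c 0 := by
    simp [Matrix.det_fin_three]
  have h1 := abs_le.mp (key 0 1 2); have h2 := abs_le.mp (key 0 2 1)
  have h3 := abs_le.mp (key 1 0 2); have h4 := abs_le.mp (key 1 2 0)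
  have h5 := abs_le.mp (key 2 0 1); have h6 := abs_le.mp (key 2 1 0)
  rw [e, abs_le]
  constructor <;> · obtain ⟨_,_⟩ := h1; obtain ⟨_,_⟩ := h2; obtain ⟨_,_⟩ := h3
                    obtain ⟨_,_⟩ := h4; obtain ⟨_,_⟩ := h5; obtain ⟨_,_⟩ := h6; linarith

lemma vecMul_bound (x : Fin 3 → ℝ) (M : Matrix (Fin 3) (Fin 3) ℝ) (t s : ℝ)
    (hx : ∀ i, |x i| ≤ t) (hM : ∀ i j, |M i j| ≤ s) : ∀ j, |(x ᵥ* M) j| ≤ 3 * s * t := by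
  intro j
  have ht : (0:ℝ) ≤ t := (abs_nonneg _).trans (hx 0)
  have e : (x ᵥ* M) j = x 0 * M 0 j + x 1 * M 1 j + x 2 * M 2 j := by
    simp [Matrix.vecMul, dotProduct, Fin.sum_univ_three]
  have key : ∀ i, |x i * M i j| ≤ t * s := fun i => by
    rw [abs_mul]; exact mul_le_mul (hx i) (hM i j) (abs_nonneg _) ht
  have h0 := abs_le.mp (key 0); have h1 := abs_le.mp (key 1); have h2 := abs_le.mp (key 2)
  rw [e, abs_le]
  constructor <;> · obtain ⟨_,_⟩ := h0; obtain ⟨_,_⟩ := h1; obtain ⟨_,_⟩ := h2; linarith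

lemma det_rows_add_smul (W₀ W₁ W₂ d₀ d₁ d₂ : Fin 3 → ℝ) (s : ℝ) :
    (Matrix.of ![W₀ + s • d₀, W₁ + s • d₁, W₂ + s • d₂]).det
      = (Matrix.of ![W₀, W₁, W₂]).det
        + s * ((Matrix.of ![d₀, W₁ + s • d₁, W₂ + s • d₂]).det
          + (Matrix.of ![W₀, d₁, W₂ + s • d₂]).det + (Matrix.of ![W₀, W₁, d₂]).det) := by
  simp [Matrix.det_fin_three]; ring


lemma rows_det_ne_zero (A : Matrix (Fin 3) (Fin 3) ℤ)
    (hirr : Irreducible (A.charpoly.map (Int.castRingHom ℚ)))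
    (u : Fin 3 → ℤ) (hu : u 0 ≠ 0 ∨ u 1 ≠ 0) :
    (Matrix.of ![u, u ᵥ* A, u ᵥ* A ᵥ* A]).det ≠ 0 := by
  intro hdet
  set Aq : Matrix (Fin 3) (Fin 3) ℚ := A.map (Int.cast : ℤ → ℚ) with hAq
  set uq : Fin 3 → ℚ := fun i => (u i : ℚ) with huq
  have hmap : (Matrix.of ![u, u ᵥ* A, u ᵥ* A ᵥ* A]).map (Int.cast : ℤ → ℚ)
      = Matrix.of ![uq, uq ᵥ* Aq, uq ᵥ* Aq ᵥ* Aq] := by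
    ext i j
    have h1 : ∀ j, ((u ᵥ* A) j : ℚ) = (uq ᵥ* Aq) j := fun j => by
      simp [Matrix.vecMul, dotProduct, Fin.sum_univ_three, huq, hAq]
    have h2 : ∀ j, ((u ᵥ* (A * A)) j : ℚ) = (uq ᵥ* (Aq * Aq)) j := fun j => by
      simp [Matrix.vecMul, dotProduct, Matrix.mul_apply, Fin.sum_univ_three, huq, hAq]
    fin_cases i <;> simp [huq, h1, h2]
  have hdetq : (Matrix.of ![uq, uq ᵥ* Aq, uq ᵥ* Aq ᵥ* Aq]).det = 0 := by
    rw [← hmap]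
    have := (Int.castRingHom ℚ).map_det (Matrix.of ![u, u ᵥ* A, u ᵥ* A ᵥ* A])
    rw [show (Int.castRingHom ℚ).mapMatrix (Matrix.of ![u, u ᵥ* A, u ᵥ* A ᵥ* A])
        = (Matrix.of ![u, u ᵥ* A, u ᵥ* A ᵥ* A]).map (Int.cast : ℤ → ℚ) from rfl] at this
    rw [← this, hdet]
    simp
  obtain ⟨c, hc, hc0⟩ := Matrix.exists_vecMul_eq_zero_iff.mpr hdetq
  set g : ℚ[X] := C (c 0) + C (c 1) * X + C (c 2) * X ^ 2 with hg
  have hg0 : g ≠ 0 := by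
    intro h
    apply hc
    have e0 : c 0 = g.coeff 0 := by simp [hg, coeff_add, coeff_C, coeff_C_mul, coeff_X_pow]
    have e1 : c 1 = g.coeff 1 := by simp [hg, coeff_add, coeff_C, coeff_C_mul, coeff_X_pow]
    have e2 : c 2 = g.coeff 2 := by simp [hg, coeff_add, coeff_C, coeff_C_mul, coeff_X_pow]
    funext i
    fin_cases i <;> simp [e0, e1, e2, h]
  have hev : Polynomial.aeval Aq g = c 0 • (1 : Matrix (Fin 3) (Fin 3) ℚ)
      + c 1 • Aq + c 2 • (Aq * Aq) := by
    rw [hg, map_add, map_add, _root_.map_mul, _root_.map_mul, map_pow, aeval_C, aeval_C,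
      aeval_C, aeval_X]
    simp [Algebra.algebraMap_eq_smul_one, smul_mul_assoc, sq]
  have hvg : uq ᵥ* (Polynomial.aeval Aq g) = 0 := by
    funext j
    rw [hev]
    have h0 := congrFun hc0 j
    simp [Matrix.vecMul, dotProduct, Fin.sum_univ_three, Matrix.add_apply,
      Matrix.smul_apply, Matrix.one_apply, Matrix.mul_apply, smul_eq_mul] at h0 ⊢
    fin_cases j <;> simp at h0 ⊢ <;> linear_combination h0
  -- coprimality
  have hχ : A.charpoly.map (Int.castRingHom ℚ) = Aq.charpoly :=
    (Matrix.charpoly_map A (Int.castRingHom ℚ)).symm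
  have hndvd : ¬ (A.charpoly.map (Int.castRingHom ℚ)) ∣ g := by
    intro hdvd
    have hdeg := Polynomial.natDegree_le_of_dvd hdvd hg0
    have h3 : (A.charpoly.map (Int.castRingHom ℚ)).natDegree = 3 := by
      rw [hχ, Matrix.charpoly_natDegree_eq_dim]
      simp
    have hgle : g.natDegree ≤ 2 := by
      rw [hg]
      compute_degree
    omega
  obtain ⟨a, b, hab⟩ := hirr.coprime_iff_not_dvd.mpr hndvd
  have key : uq = 0 := by
    have h1 : uq ᵥ* (Polynomial.aeval Aq (a * (A.charpoly.map (Int.castRingHom ℚ)) + b * g)) = uq := by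
      rw [hab]
      simp [Matrix.vecMul_one]
    rw [map_add, _root_.map_mul, _root_.map_mul, hχ, Matrix.aeval_self_charpoly, mul_zero,
      zero_add, ← _root_.map_mul, mul_comm b g, _root_.map_mul, ← Matrix.vecMul_vecMul, hvg,
      Matrix.zero_vecMul] at h1
    exact h1.symm
  rcases hu with h | h
  · have h0 : ((u 0 : ℚ)) = 0 := by simpa [huq] using congrFun key 0
    exact h (by exact_mod_cast h0)
  · have h0 : ((u 1 : ℚ)) = 0 := by simpa [huq] using congrFun key 1
    exact h (by exact_mod_cast h0)


lemma rows_det_cast (A : Matrix (Fin 3) (Fin 3) ℤ) (u : Fin 3 → ℤ) :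
    (((Matrix.of ![u, u ᵥ* A, u ᵥ* A ᵥ* A]).det : ℤ) : ℝ)
      = (Matrix.of ![(fun i => (u i : ℝ)), (fun i => (u i : ℝ)) ᵥ* A.map (Int.cast : ℤ → ℝ),
          (fun i => (u i : ℝ)) ᵥ* A.map (Int.cast : ℤ → ℝ) ᵥ* A.map (Int.cast : ℤ → ℝ)]).det := by
  set Ar := A.map (Int.cast : ℤ → ℝ) with hAr
  set ur : Fin 3 → ℝ := fun i => (u i : ℝ) with hur
  have hmap : (Matrix.of ![u, u ᵥ* A, u ᵥ* A ᵥ* A]).map (Int.cast : ℤ → ℝ)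
      = Matrix.of ![ur, ur ᵥ* Ar, ur ᵥ* Ar ᵥ* Ar] := by
    ext i j
    have h1 : ∀ j, ((u ᵥ* A) j : ℝ) = (ur ᵥ* Ar) j := fun j => by
      simp [Matrix.vecMul, dotProduct, Fin.sum_univ_three, hur, hAr]
    have h2 : ∀ j, ((u ᵥ* (A * A)) j : ℝ) = (ur ᵥ* (Ar * Ar)) j := fun j => by
      simp [Matrix.vecMul, dotProduct, Matrix.mul_apply, Fin.sum_univ_three, hur, hAr]
    fin_cases i <;> simp [hur, h1, h2]
  have := (Int.castRingHom ℝ).map_det (Matrix.of ![u, u ᵥ* A, u ᵥ* A ᵥ* A])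
  rw [show (Int.castRingHom ℝ).mapMatrix (Matrix.of ![u, u ᵥ* A, u ᵥ* A ᵥ* A])
      = (Matrix.of ![u, u ᵥ* A, u ᵥ* A ᵥ* A]).map (Int.cast : ℤ → ℝ) from rfl, hmap] at this
  exact this

lemma mulVec_rows (r0 r1 r2 u : Fin 3 → ℝ) (h0 : r0 ⬝ᵥ u = 0) (h1 : r1 ⬝ᵥ u = 0)
    (h2 : r2 ⬝ᵥ u = 0) : (Matrix.of ![r0, r1, r2]) *ᵥ u = 0 := by
  funext k
  fin_cases k
  · exact h0
  · exact h1
  · exact h2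

/-- Diophantine property of the strong unstable direction (generalized Liouville
theorem): if `(β₁, β₂, 1)` spans an eigendirection of an integer matrix with
irreducible characteristic polynomial, then `(β₁, β₂)` is a Diophantine vector. -/
theorem eigenvector_diophantine (A : Matrix (Fin 3) (Fin 3) ℤ)
    (hirr : Irreducible (A.charpoly.map (Int.castRingHom ℚ)))
    (lam β₁ β₂ : ℝ)
    (heig : (A.map (Int.cast : ℤ → ℝ)).mulVec ![β₁, β₂, 1] = lam • ![β₁, β₂, 1]) :
    ∃ c > 0, ∀ p₁ p₂ : ℤ, ¬(p₁ = 0 ∧ p₂ = 0) → ∀ q : ℤ,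
      |(p₁ : ℝ) * β₁ + (p₂ : ℝ) * β₂ - (q : ℝ)| >
        c / ((max |p₁| |p₂| : ℤ) : ℝ) ^ 2 := by
  set Ar : Matrix (Fin 3) (Fin 3) ℝ := A.map (Int.cast : ℤ → ℝ) with hAr
  set v : Fin 3 → ℝ := ![β₁, β₂, 1] with hv
  obtain ⟨a, hA, ha1⟩ : ∃ a : ℝ, (∀ i j, |Ar i j| ≤ a) ∧ 1 ≤ a := by
    have hs : (0:ℝ) ≤ ∑ k : Fin 3, ∑ l : Fin 3, |Ar k l| :=
      Finset.sum_nonneg fun k _ => Finset.sum_nonneg fun l _ => abs_nonneg _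
    refine ⟨(∑ k : Fin 3, ∑ l : Fin 3, |Ar k l|) + 1, fun i j => ?_, by linarith⟩
    have h1 : |Ar i j| ≤ ∑ l : Fin 3, |Ar i l| :=
      Finset.single_le_sum (f := fun l => |Ar i l|) (fun l _ => abs_nonneg _)
        (Finset.mem_univ j)
    have h2 : (∑ l : Fin 3, |Ar i l|) ≤ ∑ k : Fin 3, ∑ l : Fin 3, |Ar k l| :=
      Finset.single_le_sum (f := fun k => ∑ l : Fin 3, |Ar k l|)
        (fun k _ => Finset.sum_nonneg fun l _ => abs_nonneg _) (Finset.mem_univ i)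
    linarith
  obtain ⟨α, hα3, hα1⟩ : ∃ α : ℝ, α = 3 * a ∧ 1 ≤ α := ⟨3 * a, rfl, by linarith⟩
  obtain ⟨B, hB1, hb1, hb2, hbsum⟩ :
      ∃ B : ℝ, 1 ≤ B ∧ |β₁| ≤ B ∧ |β₂| ≤ B ∧ |β₁| + |β₂| ≤ B := by
    have := abs_nonneg β₁; have := abs_nonneg β₂
    exact ⟨|β₁| + |β₂| + 1, by linarith, by linarith, by linarith, by linarith⟩
  obtain ⟨K, hKdef, hK1⟩ : ∃ K : ℝ, K = 18 * α ^ 6 * (B + 1) ^ 2 ∧ 1 ≤ K := by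
    refine ⟨_, rfl, ?_⟩
    have h6 : (1:ℝ) ≤ α ^ 6 := one_le_pow₀ hα1
    have h2 : (1:ℝ) ≤ (B + 1) ^ 2 := one_le_pow₀ (by linarith)
    nlinarith
  have hK0 : (0:ℝ) < K := lt_of_lt_of_le one_pos hK1
  refine ⟨1 / (2 * K), by positivity, ?_⟩
  intro p₁ p₂ hp q
  set L : ℝ := (p₁ : ℝ) * β₁ + (p₂ : ℝ) * β₂ - (q : ℝ) with hL
  set M : ℝ := ((max |p₁| |p₂| : ℤ) : ℝ) with hM
  have hM1 : (1:ℝ) ≤ M := by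
    have h1 : (1:ℤ) ≤ max |p₁| |p₂| := by
      rcases not_and_or.mp hp with h | h
      · exact le_max_of_le_left (Int.one_le_abs h)
      · exact le_max_of_le_right (Int.one_le_abs h)
    rw [hM]; exact_mod_cast h1
  have hM0 : (0:ℝ) < M := lt_of_lt_of_le one_pos hM1
  have hMp1 : (|(p₁:ℝ)|) ≤ M := by
    rw [hM, ← Int.cast_abs]; exact_mod_cast le_max_left _ _
  have hMp2 : (|(p₂:ℝ)|) ≤ M := by
    rw [hM, ← Int.cast_abs]; exact_mod_cast le_max_right _ _
  clear_value L M
  have hKM0 : (0:ℝ) < K * M ^ 2 := by positivity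
  by_cases hLbig : 1 ≤ |L|
  · have h1 : 1 / (2 * K) / M ^ 2 ≤ 1 / (2 * K) :=
      div_le_self (by positivity) (one_le_pow₀ hM1)
    have h2 : 1 / (2 * K) ≤ 1 / 2 := by
      apply one_div_le_one_div_of_le (by norm_num)
      linarith
    linarith
  · push_neg at hLbig
    -- the integer determinant
    have hD := rows_det_ne_zero A hirr ![p₁, p₂, -q] (by
      rcases not_and_or.mp hp with h | h
      · left; simpa using h
      · right; simpa using h)
    have hD1 : (1:ℝ) ≤ |(((Matrix.of ![![p₁, p₂, -q], ![p₁, p₂, -q] ᵥ* A,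
        ![p₁, p₂, -q] ᵥ* A ᵥ* A]).det : ℤ) : ℝ)| := by
      rw [← Int.cast_abs]
      exact_mod_cast Int.one_le_abs hD
    -- real vectors
    set w : Fin 3 → ℝ := ![(p₁:ℝ), (p₂:ℝ), -((p₁:ℝ) * β₁ + (p₂:ℝ) * β₂)] with hw
    set e3 : Fin 3 → ℝ := ![0, 0, 1] with he3
    have hur : (fun i => ((![p₁, p₂, -q] : Fin 3 → ℤ) i : ℝ)) = w + L • e3 := by
      funext i
      fin_cases i <;> simp [hw, he3, hL] <;> ring
    have hw_dot : w ⬝ᵥ v = 0 := by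
      simp [hw, hv, dotProduct, Fin.sum_univ_three]
      try ring
    have step : ∀ x : Fin 3 → ℝ, x ⬝ᵥ v = 0 → (x ᵥ* Ar) ⬝ᵥ v = 0 := by
      intro x hx
      have h := (Matrix.dotProduct_mulVec x Ar v).symm
      rw [heig, dotProduct_smul, hx, smul_zero] at h
      exact h
    have hdetW : (Matrix.of ![w, w ᵥ* Ar, w ᵥ* Ar ᵥ* Ar]).det = 0 := by
      apply Matrix.exists_mulVec_eq_zero_iff.mp
      refine ⟨v, ?_, ?_⟩
      · intro h
        have := congrFun h 2
        simp [hv] at this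
      · exact mulVec_rows _ _ _ _ hw_dot (step _ hw_dot) (step _ (step _ hw_dot))
    -- the decomposition of the real determinant
    have hcast := rows_det_cast A ![p₁, p₂, -q]
    rw [hur] at hcast
    have hmat : Matrix.of ![w + L • e3, (w + L • e3) ᵥ* Ar, (w + L • e3) ᵥ* Ar ᵥ* Ar]
        = Matrix.of ![w + L • e3, (w ᵥ* Ar) + L • (e3 ᵥ* Ar),
            ((w ᵥ* Ar) ᵥ* Ar) + L • ((e3 ᵥ* Ar) ᵥ* Ar)] := by
      rw [Matrix.add_vecMul, Matrix.smul_vecMul, Matrix.add_vecMul, Matrix.smul_vecMul]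
    rw [hmat, det_rows_add_smul, hdetW, zero_add] at hcast
    -- bounds
    have hLle : |L| ≤ 1 := le_of_lt hLbig
    have hBM : (0:ℝ) ≤ B * M := by positivity
    have bW0 : ∀ i, |w i| ≤ B * M := by
      intro i
      fin_cases i <;> simp [hw]
      · calc |(p₁:ℝ)| ≤ M := hMp1
          _ ≤ B * M := le_mul_of_one_le_left hM0.le hB1
      · calc |(p₂:ℝ)| ≤ M := hMp2
          _ ≤ B * M := le_mul_of_one_le_left hM0.le hB1
      · have e : (-(↑p₂ * β₂) + -(↑p₁ * β₁) : ℝ) = -((p₁:ℝ) * β₁ + (p₂:ℝ) * β₂) := by ring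
        rw [e, abs_neg]
        calc |(p₁:ℝ) * β₁ + (p₂:ℝ) * β₂| ≤ |(p₁:ℝ)| * |β₁| + |(p₂:ℝ)| * |β₂| := by
              refine (abs_add_le _ _).trans ?_
              rw [abs_mul, abs_mul]
          _ ≤ M * |β₁| + M * |β₂| := by
              have g1 : |(p₁:ℝ)| * |β₁| ≤ M * |β₁| :=
                mul_le_mul_of_nonneg_right hMp1 (abs_nonneg _)
              have g2 : |(p₂:ℝ)| * |β₂| ≤ M * |β₂| :=
                mul_le_mul_of_nonneg_right hMp2 (abs_nonneg _)
              linarith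
          _ = (|β₁| + |β₂|) * M := by ring
          _ ≤ B * M := mul_le_mul_of_nonneg_right hbsum hM0.le
    have bd0 : ∀ i, |e3 i| ≤ 1 := by
      intro i; fin_cases i <;> simp [he3]
    have bW1 : ∀ j, |(w ᵥ* Ar) j| ≤ α * (B * M) := by
      intro j
      calc |(w ᵥ* Ar) j| ≤ 3 * a * (B * M) := vecMul_bound w Ar (B * M) a bW0 hA j
        _ = α * (B * M) := by rw [hα3]
    have bW2 : ∀ j, |((w ᵥ* Ar) ᵥ* Ar) j| ≤ α * (α * (B * M)) := by
      intro j
      calc |((w ᵥ* Ar) ᵥ* Ar) j| ≤ 3 * a * (α * (B * M)) :=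
            vecMul_bound _ Ar (α * (B * M)) a bW1 hA j
        _ = α * (α * (B * M)) := by rw [hα3]
    have bd1 : ∀ j, |(e3 ᵥ* Ar) j| ≤ α := by
      intro j
      calc |(e3 ᵥ* Ar) j| ≤ 3 * a * 1 := vecMul_bound e3 Ar 1 a bd0 hA j
        _ = α := by rw [hα3]; try ring
    have bd2 : ∀ j, |((e3 ᵥ* Ar) ᵥ* Ar) j| ≤ α * α := by
      intro j
      calc |((e3 ᵥ* Ar) ᵥ* Ar) j| ≤ 3 * a * α := vecMul_bound _ Ar α a bd1 hA j
        _ = α * α := by rw [hα3]; try ring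
    -- uniform bounds
    have hS0 : (0:ℝ) ≤ α := by linarith
    have hT : ∀ x : ℝ, x = α * α * ((B + 1) * M) → True := fun _ _ => trivial
    have bR1 : ∀ j, |((w ᵥ* Ar) + L • (e3 ᵥ* Ar)) j| ≤ α * α * ((B + 1) * M) := by
      intro j
      have h := abs_add_le ((w ᵥ* Ar) j) (L * (e3 ᵥ* Ar) j)
      have h2 : |L * (e3 ᵥ* Ar) j| ≤ α := by
        rw [abs_mul]
        calc |L| * |(e3 ᵥ* Ar) j| ≤ 1 * α :=
              mul_le_mul hLle (bd1 j) (abs_nonneg _) one_pos.le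
          _ = α := one_mul α
      have h3 := bW1 j
      have hαM : (1:ℝ) ≤ α * M := by nlinarith
      have key : α * (B * M) + α ≤ α * α * ((B + 1) * M) := by
        nlinarith [mul_nonneg (mul_nonneg hS0 hBM) (sub_nonneg.mpr hα1),
          mul_nonneg hS0 (sub_nonneg.mpr hαM)]
      calc |((w ᵥ* Ar) + L • (e3 ᵥ* Ar)) j| = |(w ᵥ* Ar) j + L * (e3 ᵥ* Ar) j| := by
            simp [Pi.add_apply, Pi.smul_apply, smul_eq_mul]
        _ ≤ |(w ᵥ* Ar) j| + |L * (e3 ᵥ* Ar) j| := abs_add_le _ _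
        _ ≤ α * (B * M) + α := by linarith
        _ ≤ α * α * ((B + 1) * M) := key
    have bR2 : ∀ j, |(((w ᵥ* Ar) ᵥ* Ar) + L • ((e3 ᵥ* Ar) ᵥ* Ar)) j|
        ≤ α * α * ((B + 1) * M) := by
      intro j
      have h2 : |L * ((e3 ᵥ* Ar) ᵥ* Ar) j| ≤ α * α := by
        rw [abs_mul]
        calc |L| * |((e3 ᵥ* Ar) ᵥ* Ar) j| ≤ 1 * (α * α) :=
              mul_le_mul hLle (bd2 j) (abs_nonneg _) one_pos.le
          _ = α * α := one_mul _
      have h3 := bW2 j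
      have key : α * (α * (B * M)) + α * α ≤ α * α * ((B + 1) * M) := by
        nlinarith [mul_nonneg (mul_nonneg hS0 hS0) (sub_nonneg.mpr hM1),
          mul_nonneg hBM (sub_nonneg.mpr hα1), mul_nonneg hS0 hBM]
      calc |(((w ᵥ* Ar) ᵥ* Ar) + L • ((e3 ᵥ* Ar) ᵥ* Ar)) j|
          = |((w ᵥ* Ar) ᵥ* Ar) j + L * ((e3 ᵥ* Ar) ᵥ* Ar) j| := by
            simp [Pi.add_apply, Pi.smul_apply, smul_eq_mul]
        _ ≤ |((w ᵥ* Ar) ᵥ* Ar) j| + |L * ((e3 ᵥ* Ar) ᵥ* Ar) j| := abs_add_le _ _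
        _ ≤ α * (α * (B * M)) + α * α := by linarith
        _ ≤ α * α * ((B + 1) * M) := key
    have hα2 : (1:ℝ) ≤ α * α := by nlinarith
    have bW0' : ∀ i, |w i| ≤ α * α * ((B + 1) * M) := by
      intro i
      calc |w i| ≤ B * M := bW0 i
        _ ≤ (B + 1) * M := by nlinarith
        _ ≤ α * α * ((B + 1) * M) := le_mul_of_one_le_left (by positivity) hα2
    have bd0' : ∀ i, |e3 i| ≤ α * α := fun i => (bd0 i).trans hα2
    have bd1' : ∀ i, |(e3 ᵥ* Ar) i| ≤ α * α := fun i =>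
      (bd1 i).trans (le_mul_of_one_le_left hS0 hα1)
    -- bound the three determinants
    have hE1 := det3_bound e3 ((w ᵥ* Ar) + L • (e3 ᵥ* Ar))
      (((w ᵥ* Ar) ᵥ* Ar) + L • ((e3 ᵥ* Ar) ᵥ* Ar))
      (α * α) (α * α * ((B + 1) * M)) (α * α * ((B + 1) * M)) bd0' bR1 bR2
    have hE2 := det3_bound w (e3 ᵥ* Ar)
      (((w ᵥ* Ar) ᵥ* Ar) + L • ((e3 ᵥ* Ar) ᵥ* Ar))
      (α * α * ((B + 1) * M)) (α * α) (α * α * ((B + 1) * M)) bW0' bd1' bR2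
    have hE3 := det3_bound w (w ᵥ* Ar) ((e3 ᵥ* Ar) ᵥ* Ar)
      (α * α * ((B + 1) * M)) (α * α * ((B + 1) * M)) (α * α) bW0'
      (fun j => (bW1 j).trans (by
        nlinarith [mul_nonneg (mul_nonneg hS0 hBM) (sub_nonneg.mpr hα1),
          mul_nonneg (mul_nonneg hS0 hS0) hM0.le])) bd2
    -- assemble
    set E := (Matrix.of ![e3, (w ᵥ* Ar) + L • (e3 ᵥ* Ar),
        ((w ᵥ* Ar) ᵥ* Ar) + L • ((e3 ᵥ* Ar) ᵥ* Ar)]).det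
      + (Matrix.of ![w, e3 ᵥ* Ar, ((w ᵥ* Ar) ᵥ* Ar) + L • ((e3 ᵥ* Ar) ᵥ* Ar)]).det
      + (Matrix.of ![w, w ᵥ* Ar, (e3 ᵥ* Ar) ᵥ* Ar]).det with hE
    have hEbound : |E| ≤ K * M ^ 2 := by
      have habs : |E| ≤ 6 * (α * α * (α * α * ((B + 1) * M)) * (α * α * ((B + 1) * M)))
          + 6 * (α * α * ((B + 1) * M) * (α * α) * (α * α * ((B + 1) * M)))
          + 6 * (α * α * ((B + 1) * M) * (α * α * ((B + 1) * M)) * (α * α)) := by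
        rw [hE]
        have t1 := abs_add_le
          ((Matrix.of ![e3, (w ᵥ* Ar) + L • (e3 ᵥ* Ar),
            ((w ᵥ* Ar) ᵥ* Ar) + L • ((e3 ᵥ* Ar) ᵥ* Ar)]).det
          + (Matrix.of ![w, e3 ᵥ* Ar, ((w ᵥ* Ar) ᵥ* Ar) + L • ((e3 ᵥ* Ar) ᵥ* Ar)]).det)
          ((Matrix.of ![w, w ᵥ* Ar, (e3 ᵥ* Ar) ᵥ* Ar]).det)
        have t2 := abs_add_le
          ((Matrix.of ![e3, (w ᵥ* Ar) + L • (e3 ᵥ* Ar),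
            ((w ᵥ* Ar) ᵥ* Ar) + L • ((e3 ᵥ* Ar) ᵥ* Ar)]).det)
          ((Matrix.of ![w, e3 ᵥ* Ar, ((w ᵥ* Ar) ᵥ* Ar) + L • ((e3 ᵥ* Ar) ᵥ* Ar)]).det)
        linarith [hE1, hE2, hE3]
      refine habs.trans (le_of_eq ?_)
      rw [hKdef]
      ring
    -- final arithmetic
    have hDE : |(((Matrix.of ![![p₁, p₂, -q], ![p₁, p₂, -q] ᵥ* A,
        ![p₁, p₂, -q] ᵥ* A ᵥ* A]).det : ℤ) : ℝ)| = |L| * |E| := by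
      rw [hcast, abs_mul]
    have h1 : (1:ℝ) ≤ |L| * (K * M ^ 2) := by
      have h0 : |L| * |E| ≤ |L| * (K * M ^ 2) :=
        mul_le_mul_of_nonneg_left hEbound (abs_nonneg L)
      rw [hDE] at hD1
      linarith
    have h2 : 1 / (K * M ^ 2) ≤ |L| := (div_le_iff₀ hKM0).mpr (by linarith)
    have h3 : 1 / (2 * K) / M ^ 2 = 1 / (2 * (K * M ^ 2)) := by ring
    have h4 : 1 / (2 * (K * M ^ 2)) < 1 / (K * M ^ 2) := by
      apply one_div_lt_one_div_of_lt hKM0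
      linarith
    rw [gt_iff_lt, h3]
    linarith
end

section
/- Non-integrality of the exponent ratio. Let A ∈ M₃(ℤ) have characteristic polynomial irreducible over ℚ whose complex roots are real numbers λ₁, λ₂, λ₃ with 0 < λ₁ < 1 < λ₂ < λ₃. Then log λ₃ / log λ₂ is not an integer. -/
open Matrix Polynomial

/-- Non-integrality of the exponent ratio: if the characteristic polynomial of
`A ∈ M₃(ℤ)` is irreducible over `ℚ` with real roots `0 < λ₁ < 1 < λ₂ < λ₃`, then
`log λ₃ / log λ₂` is not an integer. -/
theorem exponent_ratio_not_integer (A : Matrix (Fin 3) (Fin 3) ℤ)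
    (hirr : Irreducible (A.charpoly.map (Int.castRingHom ℚ)))
    (l1 l2 l3 : ℝ)
    (hfact : A.charpoly.map (Int.castRingHom ℝ) =
      (X - C l1) * (X - C l2) * (X - C l3))
    (h0 : 0 < l1) (h1 : l1 < 1) (h2 : 1 < l2) (h3 : l2 < l3) :
    ¬ ∃ n : ℤ, Real.log l3 / Real.log l2 = (n : ℝ) := by
  rintro ⟨n, hn⟩
  set p : ℚ[X] := A.charpoly.map (Int.castRingHom ℚ) with hp
  have hmapR : p.map (algebraMap ℚ ℝ) = A.charpoly.map (Int.castRingHom ℝ) := by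
    rw [hp, Polynomial.map_map]
    congr 1
  -- aeval of p over ℝ
  have haeval : ∀ x : ℝ, (Polynomial.aeval x) p =
      (x - l1) * (x - l2) * (x - l3) := by
    intro x
    rw [Polynomial.aeval_def, Polynomial.eval₂_eq_eval_map, hmapR, hfact]
    simp
  have hlog2 : 0 < Real.log l2 := Real.log_pos h2
  have hlog23 : Real.log l2 < Real.log l3 := Real.log_lt_log (by linarith) h3
  have hlog3 : Real.log l3 = (n : ℝ) * Real.log l2 := by
    field_simp at hn
    linarith [hn]
  have hn1 : (1 : ℝ) < (n : ℝ) := by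
    nlinarith
  have hn2 : 2 ≤ n := by exact_mod_cast hn1
  set m : ℕ := n.toNat with hm
  have hmn : (m : ℤ) = n := Int.toNat_of_nonneg (by omega)
  have hm2 : 2 ≤ m := by omega
  have hl3 : l3 = l2 ^ m := by
    have h1' : Real.log l3 = Real.log (l2 ^ m) := by
      rw [Real.log_pow, hlog3]
      have : ((m : ℕ) : ℝ) = (n : ℝ) := by exact_mod_cast congrArg (Int.cast : ℤ → ℝ) hmn
      rw [this]
    have hpos3 : (0 : ℝ) < l3 := by linarith
    have hpos2 : (0 : ℝ) < l2 ^ m := pow_pos (by linarith) m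
    calc l3 = Real.exp (Real.log l3) := (Real.exp_log hpos3).symm
      _ = Real.exp (Real.log (l2 ^ m)) := by rw [h1']
      _ = l2 ^ m := Real.exp_log hpos2
  -- p is the minimal polynomial of l2
  have hmonic : p.Monic := (Matrix.charpoly_monic A).map _
  have hroot2 : (Polynomial.aeval l2) p = 0 := by rw [haeval]; ring
  have hminp : minpoly ℚ l2 = p :=
    (minpoly.eq_of_irreducible_of_monic hirr hroot2 hmonic).symm
  -- l2 ^ m is a root, so p ∣ p.comp (X ^ m)
  have hrootpow : (Polynomial.aeval l2) (p.comp (X ^ m)) = 0 := by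
    rw [Polynomial.aeval_comp]
    simp only [map_pow, Polynomial.aeval_X]
    rw [← hl3, haeval]
    ring
  have hdvd : p ∣ p.comp (X ^ m) := by
    rw [← hminp]; exact minpoly.dvd ℚ l2 (by rw [hminp]; exact hrootpow)
  obtain ⟨q, hq⟩ := hdvd
  -- evaluate at l1
  have hroot1 : (Polynomial.aeval l1) p = 0 := by rw [haeval]; ring
  have hroot1pow : (Polynomial.aeval (l1 ^ m)) p = 0 := by
    have := congrArg (Polynomial.aeval l1) hq
    rw [Polynomial.aeval_comp, _root_.map_mul, hroot1, zero_mul] at this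
    simpa [map_pow] using this
  rw [haeval] at hroot1pow
  have hlt1 : l1 ^ m < l1 := by
    calc l1 ^ m ≤ l1 ^ 2 := pow_le_pow_of_le_one (le_of_lt h0) (le_of_lt h1) hm2
      _ < l1 := by nlinarith
  have hlt2 : l1 ^ m < l2 := by
    have : l1 ^ m < 1 := lt_trans hlt1 (by linarith)
    linarith
  have hlt3 : l1 ^ m < l3 := by linarith
  rcases mul_eq_zero.mp hroot1pow with h | h
  · rcases mul_eq_zero.mp h with h' | h'
    · linarith
    · linarith
  · linarith
end

section
/- Total irrationality of eigendirections. Let A ∈ M₃(ℤ) have characteristic polynomial irreducible over ℚ, let λ ∈ ℝ and let v = (v₁, v₂, v₃) ∈ ℝ³ be a nonzero vector with A·v = λ·v. Then v₁, v₂, v₃ are linearly independent over ℚ. -/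
open Matrix Polynomial

private lemma vecMul_smul_right {ι : Type*} [Fintype ι] (g : ι → ℚ) (b : ℚ)
    (N : Matrix ι ι ℚ) : g ᵥ* (b • N) = b • (g ᵥ* N) := by
  ext i
  simp [Matrix.vecMul, dotProduct, Finset.mul_sum]
  congr 1; ext j; ring

private lemma vecMul_finset_sum {ι : Type*} (s : Finset ι) (g : Fin 3 → ℚ)
    (N : ι → Matrix (Fin 3) (Fin 3) ℚ) :
    g ᵥ* (∑ k ∈ s, N k) = ∑ k ∈ s, g ᵥ* N k := by
  classical
  induction s using Finset.induction_on with
  | empty => simp [Matrix.vecMul_zero]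
  | insert _ _ h ih =>
      rw [Finset.sum_insert h, Finset.sum_insert h, Matrix.vecMul_add, ih]

/-- Total irrationality of eigendirections: the coordinates of a nonzero real
eigenvector of an integer matrix with irreducible characteristic polynomial are
linearly independent over `ℚ`. -/
theorem eigenvector_totally_irrational (A : Matrix (Fin 3) (Fin 3) ℤ)
    (hirr : Irreducible (A.charpoly.map (Int.castRingHom ℚ)))
    (lam : ℝ) (v : Fin 3 → ℝ) (hv : v ≠ 0)
    (heig : (A.map (Int.cast : ℤ → ℝ)).mulVec v = lam • v) :
    LinearIndependent ℚ v := by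
  classical
  set M : Matrix (Fin 3) (Fin 3) ℚ := A.map (Int.cast : ℤ → ℚ) with hM
  set p : Polynomial ℚ := A.charpoly.map (Int.castRingHom ℚ) with hp
  have hpM : M.charpoly = p := by
    rw [hM, hp]
    exact Matrix.charpoly_map A (Int.castRingHom ℚ)
  have hCH : ((Polynomial.aeval M) p) = 0 := by
    rw [← hpM]; exact Matrix.aeval_self_charpoly M
  have hpdeg : p.natDegree = 3 := by
    rw [hp, Polynomial.natDegree_map_eq_of_injective
      (Int.cast_injective : Function.Injective ⇑(Int.castRingHom ℚ))]
    simp [Matrix.charpoly_natDegree_eq_dim]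
  -- the functional f
  let f : (Fin 3 → ℚ) → ℝ := fun c => ∑ i, (c i : ℝ) * v i
  have hfadd : ∀ c d, f (c + d) = f c + f d := by
    intro c d
    simp only [f, Pi.add_apply, Rat.cast_add, add_mul]
    rw [Finset.sum_add_distrib]
  have hfsmul : ∀ (a : ℚ) c, f (a • c) = (a : ℝ) * f c := by
    intro a c
    simp only [f, Pi.smul_apply, smul_eq_mul, Rat.cast_mul, Finset.mul_sum, mul_assoc]
  -- key eigen-relation for f and vecMul
  have hfvec : ∀ c : Fin 3 → ℚ, f (c ᵥ* M) = lam * f c := by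
    intro c
    have hAv : ∀ j, ∑ i, ((A j i : ℝ) * v i) = lam * v j := by
      intro j
      have := congrFun heig j
      simpa [Matrix.mulVec, dotProduct, Matrix.map_apply] using this
    calc f (c ᵥ* M) = ∑ i, (∑ j, (c j : ℝ) * (A j i : ℝ)) * v i := by
          simp only [f, Matrix.vecMul, dotProduct, hM, Matrix.map_apply]
          push_cast
          rfl
      _ = ∑ j, (c j : ℝ) * (∑ i, (A j i : ℝ) * v i) := by
          simp_rw [Finset.sum_mul]
          rw [Finset.sum_comm]
          simp_rw [Finset.mul_sum, mul_assoc]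
      _ = lam * f c := by
          simp_rw [hAv, f, Finset.mul_sum]
          congr 1; ext j; ring
  -- apply the criterion
  rw [Fintype.linearIndependent_iff]
  intro g hg
  by_contra hgz
  push_neg at hgz
  obtain ⟨i₀, hi₀⟩ := hgz
  have hgne : g ≠ 0 := fun h => hi₀ (by rw [h]; rfl)
  have hfg : f g = 0 := by
    rw [← hg]
    simp only [f, Rat.smul_def, smul_eq_mul]
  -- f vanishes on the orbit
  have hforb : ∀ k : ℕ, f (g ᵥ* (M ^ k)) = 0 := by
    intro k
    induction k with
    | zero => simpa [Matrix.vecMul_one] using hfg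
    | succ n ih =>
        rw [pow_succ, ← Matrix.vecMul_vecMul, hfvec, ih, mul_zero]
  -- the orbit vectors are linearly independent
  set w : Fin 3 → (Fin 3 → ℚ) := fun k => g ᵥ* (M ^ (k : ℕ)) with hw
  have hterm : ∀ (b : ℚ) (n : ℕ),
      g ᵥ* ((Polynomial.aeval M) (Polynomial.C b * Polynomial.X ^ n)) = b • (g ᵥ* (M ^ n)) := by
    intro b n
    rw [_root_.map_mul, Polynomial.aeval_C, map_pow, Polynomial.aeval_X,
      Algebra.algebraMap_eq_smul_one, smul_mul_assoc, one_mul, vecMul_smul_right]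
  have hkill : ∀ q : Polynomial ℚ, g ᵥ* ((Polynomial.aeval M) q) = 0 → q ≠ 0 →
      q.natDegree < 3 → False := by
    intro q hq hq0 hqd
    have hnd : ¬ p ∣ q := by
      intro hdvd
      have := Polynomial.natDegree_le_of_dvd hdvd hq0
      omega
    have hcop : IsCoprime p q := (hirr.coprime_iff_not_dvd).mpr hnd
    obtain ⟨a, b, hab⟩ := hcop
    have h1 : g ᵥ* ((Polynomial.aeval M) (a * p)) = 0 := by
      rw [_root_.map_mul, hCH, mul_zero, Matrix.vecMul_zero]
    have h2 : g ᵥ* ((Polynomial.aeval M) (b * q)) = 0 := by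
      rw [mul_comm, _root_.map_mul, ← Matrix.vecMul_vecMul, hq, Matrix.zero_vecMul]
    have h3 := congrArg (fun r => g ᵥ* ((Polynomial.aeval M) r)) hab
    simp only [_root_.map_add, Matrix.vecMul_add, h1, h2, add_zero, _root_.map_one,
      Matrix.vecMul_one] at h3
    exact hgne h3.symm
  have hli : LinearIndependent ℚ w := by
    rw [Fintype.linearIndependent_iff]
    intro a ha
    by_contra haz
    push_neg at haz
    obtain ⟨k₀, hk₀⟩ := haz
    set q : Polynomial ℚ := ∑ k : Fin 3, Polynomial.C (a k) * Polynomial.X ^ (k : ℕ) with hq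
    have hqg : g ᵥ* ((Polynomial.aeval M) q) = 0 := by
      rw [hq, map_sum, vecMul_finset_sum, ← ha]
      congr 1; ext k
      rw [hterm]
    have hcoeff : ∀ k : Fin 3, q.coeff (k : ℕ) = a k := by
      intro k
      rw [hq, Polynomial.finset_sum_coeff]
      rw [Finset.sum_eq_single k (fun b _ hb => by
        simp [Polynomial.coeff_C_mul, Polynomial.coeff_X_pow, Fin.val_eq_val, hb,
          Ne.symm hb]) (by simp)]
      simp
    have hq0 : q ≠ 0 := by
      intro h
      apply hk₀
      rw [← hcoeff k₀, h, Polynomial.coeff_zero]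
    have hqd : q.natDegree < 3 := by
      have : q.natDegree ≤ 2 := by
        apply Polynomial.natDegree_sum_le_of_forall_le
        intro k _
        apply le_trans (Polynomial.natDegree_C_mul_le _ _)
        rw [Polynomial.natDegree_X_pow]
        omega
      omega
    exact hkill q hqg hq0 hqd
  -- they span, so f = 0, so v = 0
  have hspan : Submodule.span ℚ (Set.range w) = ⊤ :=
    hli.span_eq_top_of_card_eq_finrank (by simp)
  have hfzero : ∀ c : Fin 3 → ℚ, f c = 0 := by
    intro c
    have hc : c ∈ Submodule.span ℚ (Set.range w) := hspan ▸ Submodule.mem_top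
    induction hc using Submodule.span_induction with
    | mem x hx => obtain ⟨k, rfl⟩ := hx; exact hforb k
    | zero => simp [f]
    | add x y _ _ hx hy => rw [hfadd, hx, hy, add_zero]
    | smul a x _ hx => rw [hfsmul, hx, mul_zero]
  apply hv
  ext i
  have h := hfzero (Pi.single i 1)
  simp only [f, Pi.single_apply] at h
  rw [Finset.sum_eq_single i (fun b _ hb => by simp [hb]) (by simp)] at h
  simpa using h
end

section
/- Normalization by an iterate. Let A ∈ M₃(ℤ) with det A ∈ {1, −1}, and suppose all complex roots of the characteristic polynomial of A are real and none has modulus 1. Then there exists a nonzero integer n such that the complex roots of the characteristic polynomial of Aⁿ are three distinct real numbers μ₁, μ₂, μ₃ satisfying 0 < μ₁ < 1 < μ₂ < μ₃ (one may take n = 2 or n = −2). -/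
open Matrix Polynomial

lemma monic_cubic (S b d : ℤ) : (X^3 - C S * X^2 + C b * X - C d : ℤ[X]).Monic := by
  monicity!

lemma integral_of_cubic (x : ℝ) (S b d : ℤ)
    (h : x^3 - S*x^2 + b*x - d = 0) : IsIntegral ℤ x := by
  refine ⟨X^3 - C S * X^2 + C b * X - C d, monic_cubic S b d, ?_⟩
  simp only [eval₂_sub, eval₂_add, eval₂_mul, eval₂_pow, eval₂_X, eval₂_C,
    algebraMap_int_eq, Int.coe_castRingHom]
  push_cast
  linear_combination h

lemma int_of_integral_rat (x : ℝ) (hx : IsIntegral ℤ x) (q : ℚ) (hq : (q : ℝ) = x) :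
    ∃ m : ℤ, (m : ℝ) = x := by
  have h1 : IsIntegral ℤ q := by
    have : algebraMap ℚ ℝ q = x := by rw [eq_ratCast]; exact hq
    rw [← this] at hx
    exact (isIntegral_algebraMap_iff (algebraMap ℚ ℝ).injective).mp hx
  obtain ⟨m, hm⟩ := IsIntegrallyClosed.isIntegral_iff.mp h1
  refine ⟨m, ?_⟩
  rw [← hq, ← hm]
  norm_num

lemma sq_ne_of_roots (x y z : ℝ) (S b d : ℤ) (hd : d = 1 ∨ d = -1)
    (hsum : x + y + z = S) (he2 : x*y + x*z + y*z = b) (he3 : x*y*z = d)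
    (hx : |x| ≠ 1) (hy : |y| ≠ 1) (hz : |z| ≠ 1) : x^2 ≠ y^2 := by
  have hd1 : |(d:ℝ)| = 1 := by rcases hd with h | h <;> simp [h]
  have hx0 : x ≠ 0 := by
    rintro rfl; rw [← he3] at hd1; simp at hd1
  have hintx : IsIntegral ℤ x := by
    apply integral_of_cubic x S b d
    linear_combination x^2*hsum - x*he2 + he3
  have hd0 : (d:ℝ) ≠ 0 := by rcases hd with h | h <;> simp [h]
  intro hsq
  have hxy : x = y ∨ x = -y := sq_eq_sq_iff_eq_or_eq_neg.mp hsq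
  rcases hxy with hxy | hxy
  · -- repeated root case
    subst hxy
    have hb : -3*x^2 + 2*(S:ℝ)*x = b := by linear_combination he2 - 2*x*hsum
    have hdd : (S:ℝ)*x^2 - 2*x^3 = d := by linear_combination he3 - x^2*hsum
    by_cases hc : 6*b - 2*S^2 = 0
    · have lin : ((9*d - S*b : ℤ):ℝ) = 0 := by
        have lin0 : ((6*b - 2*S^2 : ℤ):ℝ) * x = ((9*d - S*b : ℤ):ℝ) := by
          push_cast
          linear_combination (-6*x - (S:ℝ))*hb + 9*hdd
        rw [hc] at lin0
        push_cast at lin0 ⊢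
        linarith
      have h9 : 9*d = S*b := by
        have h0 : (9*d - S*b : ℤ) = 0 := by exact_mod_cast lin
        linarith
      have h3b : 3*b = S^2 := by linarith
      have hS3 : S^3 = 27*d := by linear_combination (-S)*h3b - 3*h9
      rcases hd with rfl | rfl
      · have h1 : (S - 3) * (S^2 + 3*S + 9) = 0 := by linear_combination hS3
        have h2 : 0 < S^2 + 3*S + 9 := by nlinarith [sq_nonneg (2*S+3)]
        have hS : S = 3 := by
          rcases mul_eq_zero.mp h1 with h | h
          · linarith
          · linarith
        have hb3 : b = 3 := by rw [hS] at h3b; norm_num at h3b; omega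
        rw [hS, hb3] at hb
        push_cast at hb
        have hx1 : x = 1 := by nlinarith [sq_nonneg (x-1)]
        rw [hx1] at hx; simp at hx
      · have h1 : (S + 3) * (S^2 - 3*S + 9) = 0 := by linear_combination hS3
        have h2 : 0 < S^2 - 3*S + 9 := by nlinarith [sq_nonneg (2*S-3)]
        have hS : S = -3 := by
          rcases mul_eq_zero.mp h1 with h | h
          · linarith
          · linarith
        have hb3 : b = 3 := by rw [hS] at h3b; norm_num at h3b; omega
        rw [hS, hb3] at hb
        push_cast at hb
        have hx1 : x = -1 := by nlinarith [sq_nonneg (x+1)]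
        rw [hx1] at hx; simp at hx
    · -- x is rational
      set q : ℚ := ((9*d - S*b : ℤ):ℚ) / ((6*b - 2*S^2 : ℤ):ℚ) with hqdef
      have hden : (6*(b:ℝ) - 2*(S:ℝ)^2) ≠ 0 := by exact_mod_cast hc
      have hq : (q:ℝ) = x := by
        rw [hqdef]
        push_cast
        rw [div_eq_iff hden]
        linear_combination (6*x + (S:ℝ))*hb - 9*hdd
      obtain ⟨m, hm⟩ := int_of_integral_rat x hintx q hq
      have hmz : (S:ℝ)*(m:ℝ)^2 - 2*(m:ℝ)^3 = d := by rw [hm]; linear_combination hdd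
      have hmZ : S*m^2 - 2*m^3 = d := by exact_mod_cast hmz
      have hdvd : m^2 ∣ 1 := by
        rcases hd with rfl | rfl
        · exact ⟨S - 2*m, by linarith⟩
        · exact ⟨-(S - 2*m), by linarith⟩
      have hm2 : m^2 = 1 := by
        rcases Int.isUnit_iff.mp (isUnit_of_dvd_one hdvd) with h | h
        · exact h
        · nlinarith [sq_nonneg m]
      have hm1 : m = 1 ∨ m = -1 := by
        have h1 : (m - 1) * (m + 1) = 0 := by linear_combination hm2
        rcases mul_eq_zero.mp h1 with h | h
        · left; linarith
        · right; linarith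
      have : |x| = 1 := by
        rw [← hm]
        rcases hm1 with h | h <;> rw [h] <;> norm_num
      exact hx this
  · -- x = -y case
    have hy' : y = -x := by linarith
    subst hy'
    have hzS : z = S := by linarith
    have hxz : x^2 * (S:ℝ) = -(d:ℝ) := by
      rw [← hzS]; linear_combination -he3
    have hS0 : ((S:ℤ):ℝ) ≠ 0 := by
      intro h0
      rw [h0] at hxz
      simp at hxz
      rcases hd with rfl | rfl <;> omega
    set q : ℚ := ((-d : ℤ):ℚ) / ((S:ℤ):ℚ) with hqdef
    have hq : (q:ℝ) = x^2 := by
      rw [hqdef]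
      push_cast
      rw [div_eq_iff (by exact_mod_cast hS0 : ((S:ℝ)) ≠ 0)]
      linarith [hxz]
    obtain ⟨m, hm⟩ := int_of_integral_rat (x^2) (hintx.pow 2) q hq
    have hmS : (m:ℝ) * (S:ℝ) = -(d:ℝ) := by rw [hm]; linarith [hxz]
    have hmSZ : m * S = -d := by exact_mod_cast hmS
    have hSdvd : S ∣ 1 := by
      rcases hd with rfl | rfl
      · exact ⟨-m, by linarith⟩
      · exact ⟨m, by linarith⟩
    have hS1 : S = 1 ∨ S = -1 := Int.isUnit_iff.mp (isUnit_of_dvd_one hSdvd)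
    have habs : |z| = 1 := by
      rw [hzS]
      rcases hS1 with h | h <;> rw [h] <;> norm_num
    exact hz habs

lemma mswap12 {α : Type*} (a b c : α) : ({a, b, c} : Multiset α) = {b, a, c} :=
  Multiset.cons_swap a b _

lemma mswap23 {α : Type*} (a b c : α) : ({a, b, c} : Multiset α) = {a, c, b} :=
  congrArg (a ::ₘ ·) (Multiset.cons_swap b c 0)

lemma sort3 (s1 s2 s3 : ℝ) (h12 : s1 ≠ s2) (h13 : s1 ≠ s3) (h23 : s2 ≠ s3) :
    ∃ a b c, a < b ∧ b < c ∧ ({a, b, c} : Multiset ℝ) = {s1, s2, s3} := by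
  rcases lt_trichotomy s1 s2 with h | h | h
  · rcases lt_trichotomy s2 s3 with g | g | g
    · exact ⟨s1, s2, s3, h, g, rfl⟩
    · exact absurd g h23
    · rcases lt_trichotomy s1 s3 with f | f | f
      · exact ⟨s1, s3, s2, f, g, mswap23 s1 s2 s3 ▸ rfl⟩
      · exact absurd f h13
      · exact ⟨s3, s1, s2, f, h, (mswap12 s3 s1 s2).trans (mswap23 s1 s2 s3).symm⟩
  · exact absurd h h12
  · rcases lt_trichotomy s1 s3 with g | g | g
    · exact ⟨s2, s1, s3, h, g, mswap12 s2 s1 s3⟩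
    · exact absurd g h13
    · rcases lt_trichotomy s2 s3 with f | f | f
      · exact ⟨s2, s3, s1, f, g,
          (mswap23 s2 s3 s1).trans ((mswap12 s2 s1 s3).trans rfl)⟩
      · exact absurd f h23
      · exact ⟨s3, s2, s1, f, h,
          (mswap12 s3 s2 s1).trans ((mswap23 s2 s3 s1).trans (mswap12 s2 s1 s3))⟩

lemma order3 (s1 s2 s3 : ℝ) (hm : ∀ x ∈ ({s1, s2, s3} : Multiset ℝ), 0 < x ∧ x ≠ 1)
    (h12 : s1 ≠ s2) (h13 : s1 ≠ s3) (h23 : s2 ≠ s3) (hprod : s1 * s2 * s3 = 1) :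
    ∃ μ1 μ2 μ3 : ℝ, 0 < μ1 ∧ μ1 < 1 ∧ 1 < μ2 ∧ μ2 < μ3 ∧
      (({μ1, μ2, μ3} : Multiset ℝ) = {s1, s2, s3} ∨
        ({μ1, μ2, μ3} : Multiset ℝ) = {s1⁻¹, s2⁻¹, s3⁻¹}) := by
  obtain ⟨a, b, c, hab, hbc, heq⟩ := sort3 s1 s2 s3 h12 h13 h23
  have ha := hm a (heq ▸ (by simp : a ∈ ({a, b, c} : Multiset ℝ)))
  have hb := hm b (heq ▸ (by simp : b ∈ ({a, b, c} : Multiset ℝ)))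
  have hc := hm c (heq ▸ (by simp : c ∈ ({a, b, c} : Multiset ℝ)))
  have habc : a * b * c = 1 := by
    have h := congrArg Multiset.prod heq
    simp only [Multiset.insert_eq_cons, Multiset.prod_cons, Multiset.prod_singleton] at h
    rw [← mul_assoc] at h
    rw [h, ← hprod]; ring
  rcases lt_trichotomy b 1 with hb1 | hb1 | hb1
  · -- two below 1 : use inverses
    have hc1 : 1 < c := by
      by_contra hcle
      push_neg at hcle
      have h1 : a*b < b := by nlinarith [mul_pos (show (0:ℝ) < 1 - a by linarith) hb.1]
      have h2 : a*b*c ≤ a*b := mul_le_of_le_one_right (mul_pos ha.1 hb.1).le hcle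
      linarith
    refine ⟨c⁻¹, b⁻¹, a⁻¹, by positivity, ?_, ?_, ?_, Or.inr ?_⟩
    · rw [inv_lt_one_iff₀]; right; exact hc1
    · rw [lt_inv_comm₀ one_pos hb.1]; simpa using hb1
    · exact inv_strictAnti₀ ha.1 hab
    · have h := congrArg (Multiset.map (fun t : ℝ => t⁻¹)) heq
      simp only [Multiset.insert_eq_cons, Multiset.map_cons, Multiset.map_singleton] at h
      calc ({c⁻¹, b⁻¹, a⁻¹} : Multiset ℝ) = {a⁻¹, b⁻¹, c⁻¹} := by
              rw [mswap12, mswap23, mswap12]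
        _ = {s1⁻¹, s2⁻¹, s3⁻¹} := h
  · exact absurd hb1 hb.2
  · -- one below 1
    have ha1 : a < 1 := by
      by_contra hage
      push_neg at hage
      have h1 : b ≤ a*b := le_mul_of_one_le_left hb.1.le hage
      have h2 : a*b ≤ a*b*c := le_mul_of_one_le_right (mul_pos ha.1 hb.1).le (by linarith)
      linarith
    exact ⟨a, b, c, ha.1, ha1, hb1, hbc, Or.inl heq⟩

lemma prod_eq_of_multiset (a b c d e f : ℝ) (h : ({a, b, c} : Multiset ℝ) = {d, e, f}) :
    (X - C (a:ℂ)) * (X - C (b:ℂ)) * (X - C (c:ℂ))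
      = (X - C (d:ℂ)) * (X - C (e:ℂ)) * (X - C (f:ℂ)) := by
  have h2 := congrArg
    (fun s : Multiset ℝ => (s.map (fun t : ℝ => (X - C (t:ℂ)))).prod) h
  simp only [Multiset.insert_eq_cons, Multiset.map_cons, Multiset.map_singleton,
    Multiset.prod_cons, Multiset.prod_singleton] at h2
  rw [mul_assoc, mul_assoc]
  exact h2

lemma evalCharpoly (M : Matrix (Fin 3) (Fin 3) ℂ) (t : ℂ) :
    M.charpoly.eval t = (t • (1:Matrix (Fin 3) (Fin 3) ℂ) - M).det := by
  rw [Matrix.charpoly, ← Polynomial.coe_evalRingHom, RingHom.map_det]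
  congr 1
  ext i j
  by_cases h : i = j <;>
    simp [h, charmatrix_apply_eq, charmatrix_apply_ne, Matrix.one_apply, Matrix.sub_apply]

lemma charpoly_sq (B : Matrix (Fin 3) (Fin 3) ℂ) (z1 z2 z3 : ℂ)
    (h : B.charpoly = (X - C z1) * (X - C z2) * (X - C z3)) :
    (B ^ 2).charpoly = (X - C (z1^2)) * (X - C (z2^2)) * (X - C (z3^2)) := by
  apply Polynomial.funext
  intro t
  obtain ⟨s, hs⟩ : ∃ s : ℂ, s ^ 2 = t := by
    exact IsAlgClosed.exists_pow_nat_eq t (n := 2) (by norm_num)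
  subst hs
  have key : (s ^ 2) • (1:Matrix (Fin 3) (Fin 3) ℂ) - B ^ 2
      = (s • 1 - B) * (s • 1 + B) := by
    have : (s • (1:Matrix (Fin 3) (Fin 3) ℂ)) * B = B * (s • 1) := by
      simp [Matrix.smul_mul, Matrix.mul_smul]
    rw [sub_mul, mul_add, mul_add, this]
    rw [smul_mul_smul_comm]
    simp [pow_two]
    abel
  have e1 := evalCharpoly (B ^ 2) (s ^ 2)
  have e2 := evalCharpoly B s
  have e3 := evalCharpoly B (-s)
  have hneg : (-s) • (1:Matrix (Fin 3) (Fin 3) ℂ) - B = -(s • 1 + B) := by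
    rw [neg_smul]; abel
  rw [hneg, Matrix.det_neg] at e3
  rw [e1, key, Matrix.det_mul]
  rw [h] at e2 e3
  simp only [eval_mul, eval_sub, eval_X, eval_C, Fintype.card_fin] at e2 e3
  simp only [eval_mul, eval_sub, eval_X, eval_C]
  have e3' : (s • (1:Matrix (Fin 3) (Fin 3) ℂ) + B).det
      = -((-s - z1) * (-s - z2) * (-s - z3)) := by
    norm_num at e3; linear_combination e3
  rw [← e2, e3']
  ring

lemma charpoly_inv (B : Matrix (Fin 3) (Fin 3) ℂ) (z1 z2 z3 : ℂ)
    (h1 : z1 ≠ 0) (h2 : z2 ≠ 0) (h3 : z3 ≠ 0)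
    (h : B.charpoly = (X - C z1) * (X - C z2) * (X - C z3)) :
    (B⁻¹).charpoly = (X - C z1⁻¹) * (X - C z2⁻¹) * (X - C z3⁻¹) := by
  have hdet : B.det = z1 * z2 * z3 := by
    have e0 := evalCharpoly B 0
    rw [h] at e0
    simp only [eval_mul, eval_sub, eval_X, eval_C, zero_sub, zero_smul, zero_sub] at e0
    rw [Matrix.det_neg] at e0
    simp only [Fintype.card_fin] at e0
    norm_num at e0
    linear_combination -e0
  have hdet0 : B.det ≠ 0 := by
    rw [hdet]; exact mul_ne_zero (mul_ne_zero h1 h2) h3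
  have hBinv : B * B⁻¹ = 1 := Matrix.mul_nonsing_inv B (isUnit_iff_ne_zero.mpr hdet0)
  apply Polynomial.eq_of_infinite_eval_eq
  apply Set.Infinite.mono (s := {(0:ℂ)}ᶜ)
  swap
  · exact Set.Finite.infinite_compl (Set.finite_singleton 0)
  intro t ht
  simp only [Set.mem_compl_iff, Set.mem_singleton_iff] at ht
  simp only [Set.mem_setOf_eq]
  have key : B * (t • (1:Matrix (Fin 3) (Fin 3) ℂ) - B⁻¹) = t • B - 1 := by
    rw [Matrix.mul_sub, hBinv, Matrix.mul_smul, Matrix.mul_one]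
  have key2 : t • B - (1:Matrix (Fin 3) (Fin 3) ℂ) = (-t) • (t⁻¹ • 1 - B) := by
    rw [smul_sub, smul_smul]
    rw [neg_mul, mul_inv_cancel₀ ht, neg_smul, one_smul, neg_smul]
    abel
  have e1 := evalCharpoly B⁻¹ t
  have e2 := evalCharpoly B t⁻¹
  rw [h] at e2
  simp only [eval_mul, eval_sub, eval_X, eval_C] at e2
  have hd : B.det * (t • (1:Matrix (Fin 3) (Fin 3) ℂ) - B⁻¹).det
      = ((-t) • (t⁻¹ • (1:Matrix (Fin 3) (Fin 3) ℂ) - B)).det := by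
    rw [← Matrix.det_mul, key, key2]
  rw [Matrix.det_smul, Fintype.card_fin, ← e2, hdet] at hd
  have hz : (t • (1:Matrix (Fin 3) (Fin 3) ℂ) - B⁻¹).det
      = (t - z1⁻¹) * (t - z2⁻¹) * (t - z3⁻¹) := by
    apply mul_left_cancel₀ (mul_ne_zero (mul_ne_zero h1 h2) h3)
    rw [hd]
    field_simp
    ring
  rw [e1, hz]
  simp only [eval_mul, eval_sub, eval_X, eval_C]

lemma cubic_expand (z1 z2 z3 : ℂ) :
    (X - C z1) * (X - C z2) * (X - C z3)
      = X^3 - C (z1+z2+z3) * X^2 + C (z1*z2+z1*z3+z2*z3) * X - C (z1*z2*z3) := by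
  simp only [C_add, C_mul]
  ring

lemma cubic_coeffs (p : ℂ[X]) (z1 z2 z3 : ℂ)
    (h : p = (X - C z1) * (X - C z2) * (X - C z3)) :
    p.coeff 2 = -(z1+z2+z3) ∧ p.coeff 1 = z1*z2+z1*z3+z2*z3 ∧ p.coeff 0 = -(z1*z2*z3) := by
  rw [h, cubic_expand]
  refine ⟨?_, ?_, ?_⟩ <;>
    simp [coeff_mul_X_pow', coeff_add, coeff_sub, coeff_X_pow, coeff_C] <;> ring

lemma abs_eq_one_of_sq (x : ℝ) (h : x^2 = 1) : |x| = 1 := by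
  have h1 : (x-1)*(x+1) = 0 := by linear_combination h
  rcases mul_eq_zero.mp h1 with h | h
  · rw [show x = 1 by linarith]; norm_num
  · rw [show x = -1 by linarith]; norm_num

/-- Normalization by an iterate: if `A ∈ M₃(ℤ)` has `det A = ±1` and all roots of
its characteristic polynomial are real and off the unit circle, then some nonzero
integer power `Aⁿ` (viewed as a unit in the matrix ring over `ℚ`) has three distinct
real eigenvalues `0 < μ₁ < 1 < μ₂ < μ₃`. -/
theorem normalization_by_iterate (A : Matrix (Fin 3) (Fin 3) ℤ)
    (hdet : A.det = 1 ∨ A.det = -1)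
    (hreal : ∀ z : ℂ, (A.charpoly.map (Int.castRingHom ℂ)).IsRoot z → z.im = 0)
    (hhyp : ∀ z : ℂ, (A.charpoly.map (Int.castRingHom ℂ)).IsRoot z → ‖z‖ ≠ 1) :
    ∃ n : ℤ, n ≠ 0 ∧ ∃ u : (Matrix (Fin 3) (Fin 3) ℚ)ˣ,
      (u : Matrix (Fin 3) (Fin 3) ℚ) = A.map (Int.cast : ℤ → ℚ) ∧
      ∃ μ₁ μ₂ μ₃ : ℝ, 0 < μ₁ ∧ μ₁ < 1 ∧ 1 < μ₂ ∧ μ₂ < μ₃ ∧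
        ((u ^ n : (Matrix (Fin 3) (Fin 3) ℚ)ˣ) : Matrix (Fin 3) (Fin 3) ℚ).charpoly.map
            (Rat.castHom ℂ) =
          (X - C (μ₁ : ℂ)) * (X - C (μ₂ : ℂ)) * (X - C (μ₃ : ℂ)) := by
  classical
  set p := A.charpoly.map (Int.castRingHom ℂ) with hp
  have hmonic : p.Monic := (A.charpoly_monic).map _
  have hdeg : p.natDegree = 3 := by
    rw [hp, Polynomial.natDegree_map_eq_of_injective Int.cast_injective,
      Matrix.charpoly_natDegree_eq_dim, Fintype.card_fin]
  have hsplit : p.Splits := IsAlgClosed.splits p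
  have hcard : p.roots.card = 3 := by
    rw [← hdeg]
    exact (Polynomial.splits_iff_card_roots.mp hsplit)
  obtain ⟨z1, z2, z3, hz⟩ := Multiset.card_eq_three.mp hcard
  have hproots : p = (X - C z1) * (X - C z2) * (X - C z3) := by
    conv_lhs => rw [hsplit.eq_prod_roots_of_monic hmonic]
    rw [hz]
    simp only [Multiset.insert_eq_cons, Multiset.map_cons, Multiset.map_singleton,
      Multiset.prod_cons, Multiset.prod_singleton]
    ring
  have hproot : ∀ w ∈ ({z1, z2, z3} : Multiset ℂ), p.IsRoot w := by
    intro w hw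
    apply Polynomial.isRoot_of_mem_roots
    rw [hz]
    exact hw
  -- real roots
  have hre : ∀ w ∈ ({z1, z2, z3} : Multiset ℂ), w = ((w.re : ℝ) : ℂ) := by
    intro w hw
    have him := hreal w (hproot w hw)
    rw [Complex.ext_iff]
    simp [him]
  obtain ⟨x1, hz1⟩ : ∃ x : ℝ, z1 = (x : ℂ) := ⟨z1.re, hre z1 (by simp)⟩
  obtain ⟨x2, hz2⟩ : ∃ x : ℝ, z2 = (x : ℂ) := ⟨z2.re, hre z2 (by simp)⟩
  obtain ⟨x3, hz3⟩ : ∃ x : ℝ, z3 = (x : ℂ) := ⟨z3.re, hre z3 (by simp)⟩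
  -- moduli
  have habs1 : |x1| ≠ 1 := by
    have := hhyp z1 (hproot z1 (by simp)); rwa [hz1, Complex.norm_real, Real.norm_eq_abs] at this
  have habs2 : |x2| ≠ 1 := by
    have := hhyp z2 (hproot z2 (by simp)); rwa [hz2, Complex.norm_real, Real.norm_eq_abs] at this
  have habs3 : |x3| ≠ 1 := by
    have := hhyp z3 (hproot z3 (by simp)); rwa [hz3, Complex.norm_real, Real.norm_eq_abs] at this
  -- coefficients
  obtain ⟨hc2, hc1, hc0⟩ := cubic_coeffs p z1 z2 z3 hproots
  have hpk : ∀ k, p.coeff k = ((A.charpoly.coeff k : ℤ) : ℂ) := by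
    intro k; rw [hp, Polynomial.coeff_map]; rfl
  set S : ℤ := -A.charpoly.coeff 2 with hSdef
  set b : ℤ := A.charpoly.coeff 1 with hbdef
  set d : ℤ := A.det with hddef
  have hcoeff0 : A.charpoly.coeff 0 = -d := by
    have := A.det_eq_sign_charpoly_coeff
    rw [Fintype.card_fin] at this
    rw [hddef, this]; ring
  -- real symmetric function equations
  have hsum : x1 + x2 + x3 = (S : ℝ) := by
    have : ((x1 + x2 + x3 : ℝ) : ℂ) = ((S : ℝ) : ℂ) := by
      push_cast
      rw [← hz1, ← hz2, ← hz3]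
      have h := (hpk 2).symm.trans hc2
      rw [hSdef]
      push_cast
      linear_combination h
    exact_mod_cast this
  have he2 : x1*x2 + x1*x3 + x2*x3 = (b : ℝ) := by
    have : ((x1*x2 + x1*x3 + x2*x3 : ℝ) : ℂ) = ((b : ℝ) : ℂ) := by
      push_cast
      rw [← hz1, ← hz2, ← hz3]
      have h := (hpk 1).symm.trans hc1
      rw [hbdef]
      push_cast
      linear_combination -h
    exact_mod_cast this
  have he3 : x1*x2*x3 = (d : ℝ) := by
    have : ((x1*x2*x3 : ℝ) : ℂ) = ((d : ℝ) : ℂ) := by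
      push_cast
      rw [← hz1, ← hz2, ← hz3]
      have h := (hpk 0).symm.trans hc0
      rw [hcoeff0] at h
      push_cast at h
      linear_combination h
    exact_mod_cast this
  have hd' : d = 1 ∨ d = -1 := hdet
  -- distinct squares
  have hne12 : x1^2 ≠ x2^2 :=
    sq_ne_of_roots x1 x2 x3 S b d hd' hsum he2 he3 habs1 habs2 habs3
  have hne13 : x1^2 ≠ x3^2 :=
    sq_ne_of_roots x1 x3 x2 S b d hd' (by linarith) (by linear_combination he2)
      (by linear_combination he3) habs1 habs3 habs2
  have hne23 : x2^2 ≠ x3^2 :=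
    sq_ne_of_roots x2 x3 x1 S b d hd' (by linarith) (by linear_combination he2)
      (by linear_combination he3) habs2 habs3 habs1
  -- nonzero roots
  have hd0 : (d:ℝ) ≠ 0 := by rcases hd' with h | h <;> simp [h]
  have hx10 : x1 ≠ 0 := by rintro rfl; simp at he3; exact hd0 he3.symm
  have hx20 : x2 ≠ 0 := by
    rintro rfl; apply hd0; rw [← he3]; ring
  have hx30 : x3 ≠ 0 := by
    rintro rfl; apply hd0; rw [← he3]; ring
  -- squares
  have hm : ∀ x ∈ ({x1^2, x2^2, x3^2} : Multiset ℝ), 0 < x ∧ x ≠ 1 := by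
    intro x hxmem
    simp only [Multiset.insert_eq_cons, Multiset.mem_cons, Multiset.mem_singleton] at hxmem
    rcases hxmem with rfl | rfl | rfl
    · exact ⟨by positivity, fun h => habs1 (abs_eq_one_of_sq x1 h)⟩
    · exact ⟨by positivity, fun h => habs2 (abs_eq_one_of_sq x2 h)⟩
    · exact ⟨by positivity, fun h => habs3 (abs_eq_one_of_sq x3 h)⟩
  have hprodsq : x1^2 * x2^2 * x3^2 = 1 := by
    have : (x1*x2*x3)^2 = ((d:ℝ))^2 := by rw [he3]
    have hd2 : ((d:ℝ))^2 = 1 := by rcases hd' with h | h <;> simp [h]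
    nlinarith [this, hd2]
  obtain ⟨μ1, μ2, μ3, hμ0, hμ1, hμ2, hμ3, hcase⟩ :=
    order3 (x1^2) (x2^2) (x3^2) hm hne12 hne13 hne23 hprodsq
  -- the unit
  have hdetq : IsUnit (A.map (Int.cast : ℤ → ℚ)).det := by
    have hmd : (A.map (Int.cast : ℤ → ℚ)).det = ((d : ℤ) : ℚ) := by
      rw [hddef]
      exact (RingHom.map_det (Int.castRingHom ℚ) A).symm
    rw [hmd]
    rcases hd' with h | h <;> rw [h] <;> norm_num
  obtain ⟨u, hu⟩ := (Matrix.isUnit_iff_isUnit_det _).mpr hdetq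
  -- complex matrix
  set B : Matrix (Fin 3) (Fin 3) ℂ := A.map (Int.cast : ℤ → ℂ) with hBdef
  have hBcp : B.charpoly = (X - C z1) * (X - C z2) * (X - C z3) := by
    rw [hBdef]
    rw [show (A.map (Int.cast : ℤ → ℂ)).charpoly = p from Matrix.charpoly_map A (Int.castRingHom ℂ)]
    exact hproots
  have hmapmap : (A.map (Int.cast : ℤ → ℚ)).map (Rat.cast : ℚ → ℂ) = B := by
    rw [hBdef]
    ext i j
    simp [Matrix.map_apply]
  rcases hcase with hms | hms
  · -- n = 2
    refine ⟨2, by norm_num, u, hu, μ1, μ2, μ3, hμ0, hμ1, hμ2, hμ3, ?_⟩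
    have hupow : ((u ^ (2:ℤ) : (Matrix (Fin 3) (Fin 3) ℚ)ˣ) : Matrix (Fin 3) (Fin 3) ℚ)
        = (A.map (Int.cast : ℤ → ℚ))^2 := by
      rw [show (2:ℤ) = ((2:ℕ):ℤ) from rfl, zpow_natCast, Units.val_pow_eq_pow_val, hu]
    rw [hupow]
    rw [show ((A.map (Int.cast : ℤ → ℚ))^2).charpoly.map (Rat.castHom ℂ)
        = (((A.map (Int.cast : ℤ → ℚ))^2).map (Rat.cast : ℚ → ℂ)).charpoly
      from (Matrix.charpoly_map _ (Rat.castHom ℂ)).symm]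
    rw [show ((A.map (Int.cast : ℤ → ℚ))^2).map (Rat.cast : ℚ → ℂ) = B^2 by
      rw [← hmapmap, pow_two, pow_two]
      exact Matrix.map_mul (f := Rat.castHom ℂ)]
    rw [charpoly_sq B z1 z2 z3 hBcp]
    rw [hz1, hz2, hz3]
    have := prod_eq_of_multiset μ1 μ2 μ3 (x1^2) (x2^2) (x3^2) hms
    push_cast at this ⊢
    exact this.symm
  · -- n = -2
    refine ⟨-2, by norm_num, u, hu, μ1, μ2, μ3, hμ0, hμ1, hμ2, hμ3, ?_⟩
    set N : Matrix (Fin 3) (Fin 3) ℚ := ((u⁻¹ : (Matrix (Fin 3) (Fin 3) ℚ)ˣ) : Matrix (Fin 3) (Fin 3) ℚ) with hNdef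
    have hz10 : z1 ≠ 0 := by rw [hz1]; exact_mod_cast hx10
    have hz20 : z2 ≠ 0 := by rw [hz2]; exact_mod_cast hx20
    have hz30 : z3 ≠ 0 := by rw [hz3]; exact_mod_cast hx30
    have hupow : ((u ^ (-2:ℤ) : (Matrix (Fin 3) (Fin 3) ℚ)ˣ) : Matrix (Fin 3) (Fin 3) ℚ)
        = N^2 := by
      have h1 : u ^ (-2:ℤ) = (u⁻¹)^2 := by
        rw [show (-2:ℤ) = -((2:ℕ):ℤ) from rfl, _root_.zpow_neg, zpow_natCast, inv_pow]
      rw [h1, Units.val_pow_eq_pow_val]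
    have hNB : N.map (Rat.cast : ℚ → ℂ) = B⁻¹ := by
      have h0 : (A.map (Int.cast : ℤ → ℚ)) * N = 1 := by
        rw [hNdef, ← hu, Units.mul_inv]
      have h1 : B * N.map (Rat.cast : ℚ → ℂ) = 1 := by
        calc B * N.map (Rat.cast : ℚ → ℂ)
            = ((A.map (Int.cast : ℤ → ℚ)) * N).map (Rat.cast : ℚ → ℂ) := by
              rw [← hmapmap]
              exact (Matrix.map_mul (f := Rat.castHom ℂ)).symm
          _ = (1 : Matrix (Fin 3) (Fin 3) ℚ).map (Rat.cast : ℚ → ℂ) := by rw [h0]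
          _ = 1 := Matrix.map_one _ (by norm_num) (by norm_num)
      exact (Matrix.inv_eq_right_inv h1).symm
    rw [hupow]
    rw [show (N^2).charpoly.map (Rat.castHom ℂ) = ((N^2).map (Rat.cast : ℚ → ℂ)).charpoly
      from (Matrix.charpoly_map _ (Rat.castHom ℂ)).symm]
    rw [show (N^2).map (Rat.cast : ℚ → ℂ) = (B⁻¹)^2 by
      rw [pow_two, pow_two, ← hNB]
      exact Matrix.map_mul (f := Rat.castHom ℂ)]
    rw [charpoly_sq (B⁻¹) z1⁻¹ z2⁻¹ z3⁻¹ (charpoly_inv B z1 z2 z3 hz10 hz20 hz30 hBcp)]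
    have hpm := prod_eq_of_multiset μ1 μ2 μ3 ((x1^2)⁻¹) ((x2^2)⁻¹) ((x3^2)⁻¹) hms
    rw [hz1, hz2, hz3]
    push_cast at hpm ⊢
    simp only [inv_pow]
    exact hpm.symm
end

section
/- One-dimensional bootstrap of regularity for conjugacies of expanding maps (Lemma 3.1 in the case of one-dimensional leaves). Let r ∈ ℕ, r ≥ 2, μ > 1, K > 0. Let f, g : ℝ → ℝ be C^r diffeomorphisms such that g′(x) ≥ μ and f′(x) ≥ μ for all x ∈ ℝ, and |g^{(j)}(x)| ≤ K and |f^{(j)}(x)| ≤ K for all x ∈ ℝ and all 1 ≤ j ≤ r. Let h : ℝ → ℝ be a C¹ diffeomorphism with h ∘ g = f ∘ h and with c ≤ h′(x) ≤ C for all x, for some constants 0 < c ≤ C. Then h is of class C^r, with derivatives up to order r uniformly bounded on ℝ. -/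
open Filter Function Nat

/-- Combine finitely many bounds into a uniform one. -/
lemma my_exists_uniform_bound (n : ℕ) (c : ℕ → ℝ) :
    ∃ C : ℝ, 0 ≤ C ∧ ∀ i ≤ n, c i ≤ C := by
  refine ⟨∑ j ∈ Finset.range (n+1), max (c j) 0, ?_, ?_⟩
  · exact Finset.sum_nonneg fun j _ => le_max_right _ _
  · intro i hi
    calc c i ≤ max (c i) 0 := le_max_left _ _
    _ ≤ _ := Finset.single_le_sum (f := fun j => max (c j) 0)
        (fun j _ => le_max_right _ _) (Finset.mem_range.mpr (Nat.lt_succ_of_le hi))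

/-- Partial geometric sums (starting at exponent 1) are bounded. -/
lemma my_geom_bound {q : ℝ} (h0 : 0 ≤ q) (h1 : q < 1) (k : ℕ) :
    ∑ i ∈ Finset.range k, q ^ (i+1) ≤ q * (1 - q)⁻¹ := by
  have hs : Summable (fun i : ℕ => q ^ (i+1)) := by
    simpa [pow_succ, mul_comm] using (summable_geometric_of_lt_one h0 h1).mul_left q
  calc ∑ i ∈ Finset.range k, q ^ (i+1) ≤ ∑' i : ℕ, q ^ (i+1) :=
        Summable.sum_le_tsum _ (fun i _ => pow_nonneg h0 _) hs
  _ = q * (1 - q)⁻¹ := by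
      rw [show (fun i : ℕ => q ^ (i+1)) = fun i : ℕ => q * q ^ i by
            funext i; ring, tsum_mul_left, tsum_geometric_of_lt_one h0 h1]

/-- Explicit iterated derivative of `Real.log` on the positive axis. -/
lemma my_iteratedDeriv_log : ∀ n : ℕ, 1 ≤ n → ∀ y : ℝ, 0 < y →
    iteratedDeriv n Real.log y = (-1)^(n-1) * ((n-1)! : ℝ) * (y ^ n)⁻¹ := by
  intro n
  induction n with
  | zero => omega
  | succ n IH =>
    intro _ y hy
    rcases Nat.eq_zero_or_pos n with h0 | h0
    · subst h0
      simp [iteratedDeriv_one, Real.deriv_log]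
    · obtain ⟨j, rfl⟩ : ∃ j, n = j + 1 := ⟨n - 1, by omega⟩
      have IH' := IH (by omega)
      have hEq : Set.EqOn (iteratedDeriv (j+1) Real.log)
          (fun t => (-1:ℝ)^j * ((j)! : ℝ) * (t ^ (j+1))⁻¹) (Set.Ioi 0) := by
        intro t ht
        simpa using IH' t ht
      have hev : iteratedDeriv (j+1) Real.log =ᶠ[nhds y]
          (fun t => (-1:ℝ)^j * ((j)! : ℝ) * (t ^ (j+1))⁻¹) :=
        Filter.eventuallyEq_of_mem (isOpen_Ioi.mem_nhds hy) hEq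
      have hyn : (y:ℝ) ≠ 0 := ne_of_gt hy
      have hD : HasDerivAt (fun t : ℝ => (-1:ℝ)^j * ((j)! : ℝ) * (t ^ (j+1))⁻¹)
          ((-1:ℝ)^j * ((j)! : ℝ) * (-((j+1) * y^j) / (y^(j+1))^2)) y := by
        have h1 : HasDerivAt (fun t : ℝ => t ^ (j+1)) ((j+1) * y^j) y := by
          simpa using hasDerivAt_pow (j+1) y
        exact (h1.inv (pow_ne_zero _ hyn)).const_mul _
      have hkey : iteratedDeriv (j+2) Real.log y
          = (-1:ℝ)^j * ((j)! : ℝ) * (-((j+1) * y^j) / (y^(j+1))^2) := by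
        rw [iteratedDeriv_succ, hev.deriv_eq]
        exact hD.deriv
      have h2 : (j + 1 + 1 - 1) = j + 1 := by omega
      rw [hkey, h2]
      rw [Nat.factorial_succ]
      push_cast
      field_simp
      ring

/-- `iteratedDeriv` version of the composition bound. -/
lemma my_comp_bound {out inn : ℝ → ℝ} {N n : ℕ} (hout : ContDiff ℝ (N:ℕ) out)
    (hinn : ContDiff ℝ (N:ℕ) inn) (hn : n ≤ N) (x : ℝ) {C D : ℝ}
    (hC : ∀ i, i ≤ n → |iteratedDeriv i out (inn x)| ≤ C)
    (hD : ∀ i, 1 ≤ i → i ≤ n → |iteratedDeriv i inn x| ≤ D ^ i) :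
    |iteratedDeriv n (out ∘ inn) x| ≤ n ! * C * D ^ n := by
  have h := norm_iteratedFDeriv_comp_le (𝕜 := ℝ) hout hinn (by exact_mod_cast hn) x
    (C := C) (D := D) ?_ ?_
  · simpa [norm_iteratedFDeriv_eq_norm_iteratedDeriv, Real.norm_eq_abs] using h
  · intro i hi
    simpa [norm_iteratedFDeriv_eq_norm_iteratedDeriv, Real.norm_eq_abs] using hC i hi
  · intro i h1 h2
    simpa [norm_iteratedFDeriv_eq_norm_iteratedDeriv, Real.norm_eq_abs] using hD i h1 h2

/-- `iteratedDeriv` version of the product bound. -/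
lemma my_mul_bound {out inn : ℝ → ℝ} {N n : ℕ} (hout : ContDiff ℝ (N:ℕ) out)
    (hinn : ContDiff ℝ (N:ℕ) inn) (hn : n ≤ N) (x : ℝ) :
    |iteratedDeriv n (fun y => out y * inn y) x| ≤ ∑ i ∈ Finset.range (n + 1),
      (n.choose i : ℝ) * |iteratedDeriv i out x| * |iteratedDeriv (n - i) inn x| := by
  have h := norm_iteratedFDeriv_mul_le (𝕜 := ℝ) hout hinn x (n := n) (by exact_mod_cast hn)
  simpa [norm_iteratedFDeriv_eq_norm_iteratedDeriv, Real.norm_eq_abs] using h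

/-- Bound for the iterated derivatives of `Real.log ∘ z`. -/
lemma my_log_comp_bound {z : ℝ → ℝ} {N n : ℕ} (hz : ContDiff ℝ (N:ℕ) z)
    (hn : n ≤ N) {Kz : ℝ} (hz1 : ∀ y, 1 ≤ z y) (hzK : ∀ y, z y ≤ Kz)
    {D : ℝ} (hD : ∀ i, 1 ≤ i → i ≤ n → ∀ y, |iteratedDeriv i z y| ≤ D ^ i) (x : ℝ) :
    |iteratedDeriv n (Real.log ∘ z) x| ≤ n ! * (max (Real.log Kz) (n ! : ℝ)) * D ^ n := by
  have hlogC : ContDiffOn ℝ (N:ℕ) Real.log (Set.Ioi (1/2 : ℝ)) :=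
    Real.contDiffOn_log.mono (by intro t ht; simp at ht ⊢; intro h; rw [h] at ht; norm_num at ht)
  have hmaps : Set.MapsTo z Set.univ (Set.Ioi (1/2 : ℝ)) := by
    intro y _; have := hz1 y; simp only [Set.mem_Ioi]; linarith
  have h := norm_iteratedFDerivWithin_comp_le (𝕜 := ℝ) hlogC hz.contDiffOn
    (by exact_mod_cast hn) (isOpen_Ioi.uniqueDiffOn) uniqueDiffOn_univ hmaps
    (Set.mem_univ x) (C := max (Real.log Kz) (n ! : ℝ)) (D := D) ?_ ?_
  · rw [iteratedFDerivWithin_univ] at h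
    simpa [norm_iteratedFDeriv_eq_norm_iteratedDeriv, Real.norm_eq_abs] using h
  · intro i hi
    have hzx : z x ∈ Set.Ioi (1/2 : ℝ) := hmaps (Set.mem_univ x)
    rw [iteratedFDerivWithin_of_isOpen i isOpen_Ioi hzx,
      norm_iteratedFDeriv_eq_norm_iteratedDeriv, Real.norm_eq_abs]
    rcases Nat.eq_zero_or_pos i with h0 | h0
    · subst h0
      simp only [iteratedDeriv_zero]
      have h1 := hz1 x
      have h2 := hzK x
      have : |Real.log (z x)| = Real.log (z x) := abs_of_nonneg (Real.log_nonneg h1)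
      rw [this]
      exact le_trans (Real.log_le_log (by linarith) h2) (le_max_left _ _)
    · rw [my_iteratedDeriv_log i h0 (z x) (by linarith [hz1 x])]
      have h1 : (1:ℝ) ≤ z x := hz1 x
      have hpow : (1:ℝ) ≤ (z x) ^ i := one_le_pow₀ h1
      have : |(-1:ℝ)^(i-1) * ((i-1)! : ℝ) * ((z x ^ i)⁻¹)| ≤ ((i-1)! : ℝ) := by
        rw [abs_mul, abs_mul, abs_pow, abs_neg, abs_one, one_pow, one_mul,
          Nat.abs_cast, abs_inv, abs_of_nonneg (by positivity)]
        calc ((i-1)! : ℝ) * (z x ^ i)⁻¹ ≤ ((i-1)! : ℝ) * 1 := by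
              apply mul_le_mul_of_nonneg_left _ (by positivity)
              exact inv_le_one_of_one_le₀ hpow
        _ = _ := mul_one _
      refine le_trans this (le_trans ?_ (le_max_right _ _))
      exact_mod_cast Nat.factorial_le (by omega)
  · intro i h1 h2
    rw [iteratedFDerivWithin_univ, norm_iteratedFDeriv_eq_norm_iteratedDeriv, Real.norm_eq_abs]
    exact hD i h1 h2 x

lemma my_iteratedDeriv_exp (n : ℕ) (y : ℝ) : iteratedDeriv n Real.exp y = Real.exp y := by
  rw [iteratedDeriv_eq_iterate, Real.iter_deriv_exp]

lemma my_itd_const_mul {f : ℝ → ℝ} {n : ℕ} (hf : ContDiff ℝ (n:ℕ) f) (c : ℝ) (x : ℝ) :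
    iteratedDeriv n (fun z => c * f z) x = c * iteratedDeriv n f x := by
  simp only [← iteratedDerivWithin_univ]
  exact iteratedDerivWithin_const_mul (Set.mem_univ x) uniqueDiffOn_univ c hf.contDiffWithinAt

lemma my_itd_sub {f g : ℝ → ℝ} {n : ℕ} (hf : ContDiff ℝ (n:ℕ) f) (hg : ContDiff ℝ (n:ℕ) g)
    (x : ℝ) : iteratedDeriv n (fun z => f z - g z) x
      = iteratedDeriv n f x - iteratedDeriv n g x := by
  simp only [← iteratedDerivWithin_univ]
  exact iteratedDerivWithin_sub (Set.mem_univ x) uniqueDiffOn_univ hf.contDiffWithinAt hg.contDiffWithinAt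

lemma my_itd_sum {ι : Type*} (s : Finset ι) (f : ι → ℝ → ℝ) {n : ℕ}
    (hf : ∀ i ∈ s, ContDiff ℝ (n:ℕ) (f i)) (x : ℝ) :
    iteratedDeriv n (fun z => ∑ i ∈ s, f i z) x = ∑ i ∈ s, iteratedDeriv n (f i) x := by
  simp only [iteratedDeriv_eq_iteratedFDeriv]
  rw [show (fun z => ∑ i ∈ s, f i z) = (∑ i ∈ s, f i ·) from rfl, iteratedFDeriv_sum hf]
  simp

/-- Data package for a uniformly expanding map. -/
structure MyPack (m : ℕ) (μ : ℝ) (g : ℝ → ℝ) where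
  u : ℝ → ℝ
  p : ℝ
  Psi : ℝ → ℝ
  hgu : ∀ x, g (u x) = x
  hug : ∀ x, u (g x) = x
  hp : g p = p
  hpu : ∀ z, g z = z → z = p
  hcontr : ∀ (k : ℕ) (x : ℝ), |u^[k] x - p| ≤ (μ⁻¹)^k * |x - p|
  hPsi : ContDiff ℝ (m : ℕ) Psi
  hPsid : ∀ j, 1 ≤ j → j ≤ m → ∃ c : ℝ, ∀ x, |iteratedDeriv j Psi x| ≤ c
  hPsis : ∀ x, Filter.Tendsto (fun n => ∑ k ∈ Finset.range n,
      (Real.log (deriv g (u^[k+1] x)) - Real.log (deriv g p))) Filter.atTop (nhds (Psi x))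

set_option maxHeartbeats 1000000 in
lemma myPack_exists {m : ℕ} {μ K : ℝ} {g : ℝ → ℝ} (hm : 1 ≤ m) (hμ : 1 < μ) (hK : 0 < K)
    (hg : ContDiff ℝ ((m+1 : ℕ)) g) (hgb : Function.Bijective g)
    (hg' : ∀ x, μ ≤ deriv g x)
    (hgK : ∀ j, 1 ≤ j → j ≤ m+1 → ∀ x, |iteratedDeriv j g x| ≤ K) :
    Nonempty (MyPack m μ g) := by
  have hμ0 : (0:ℝ) < μ := lt_trans one_pos hμ
  have hq0 : (0:ℝ) ≤ μ⁻¹ := inv_nonneg.mpr hμ0.le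
  have hq1 : μ⁻¹ < 1 := by
    rw [inv_lt_one_iff₀]; right; exact hμ
  have hgd : Differentiable ℝ g := hg.differentiable (by simp)
  have hg'pos : ∀ x, 0 < deriv g x := fun x => lt_of_lt_of_le hμ0 (hg' x)
  have hmono : StrictMono g := strictMono_of_deriv_pos hg'pos
  -- the inverse map
  let gi := StrictMono.orderIsoOfSurjective g hmono hgb.2
  let u : ℝ → ℝ := fun x => gi.symm x
  have hgu : ∀ x, g (u x) = x := fun x =>
    StrictMono.orderIsoOfSurjective_self_symm_apply g hmono hgb.2 x
  have hug : ∀ x, u (g x) = x := fun x => hmono.injective (by rw [hgu])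
  have hucont : Continuous u := by
    have : Continuous (gi.symm : ℝ ≃o ℝ).toHomeomorph := (gi.symm.toHomeomorph).continuous
    exact this
  have hDu : ∀ x, HasDerivAt u ((deriv g (u x))⁻¹) x := fun x =>
    HasDerivAt.of_local_left_inverse hucont.continuousAt ((hgd (u x)).hasDerivAt)
      (ne_of_gt (hg'pos _)) (Filter.Eventually.of_forall hgu)
  have hud : Differentiable ℝ u := fun x => (hDu x).differentiableAt
  have hderivu : deriv u = fun x => (deriv g (u x))⁻¹ := funext fun x => (hDu x).deriv
  have hu_le : ∀ x, |deriv u x| ≤ μ⁻¹ := by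
    intro x
    rw [hderivu, abs_of_pos (inv_pos.mpr (hg'pos _))]
    exact inv_anti₀ hμ0 (hg' _)
  -- smoothness of the inverse
  have hgderiv : ContDiff ℝ (m:ℕ) (deriv g) := by
    have h1 : ContDiff ℝ ((m:WithTop ℕ∞)+1) g := by exact_mod_cast hg
    exact (contDiff_succ_iff_deriv.mp h1).2.2
  have hucd : ∀ k : ℕ, k ≤ m+1 → ContDiff ℝ (k:ℕ) u := by
    intro k
    induction k with
    | zero => exact fun _ => contDiff_zero.mpr hucont
    | succ k IH =>
      intro hk1
      have hcd : ContDiff ℝ (k:ℕ) (deriv u) := by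
        rw [hderivu]
        have h1 : ContDiff ℝ (k:ℕ) (fun x => deriv g (u x)) :=
          (hgderiv.of_le (by exact_mod_cast (by omega : k ≤ m))).comp (IH (by omega))
        exact h1.inv fun x => ne_of_gt (hg'pos _)
      have : ContDiff ℝ ((k:WithTop ℕ∞)+1) u :=
        contDiff_succ_iff_deriv.mpr ⟨hud, by intro hh; exact absurd hh (by simp), hcd⟩
      exact_mod_cast this
  have hu : ContDiff ℝ ((m+1:ℕ)) u := hucd (m+1) le_rfl
  -- slope inequality and fixed point
  have hslope : ∀ a b : ℝ, a < b → (g a - a) + (μ - 1)*(b - a) ≤ g b - b := by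
    intro a b hab
    obtain ⟨ξ, _, hξ⟩ := exists_hasDerivAt_eq_slope g (deriv g) hab
      (hg.continuous.continuousOn) (fun t _ => (hgd t).hasDerivAt)
    have h1 : μ * (b - a) ≤ g b - g a := by
      have h2 : g b - g a = deriv g ξ * (b - a) := by
        rw [hξ]; field_simp [ne_of_gt (by linarith : (0:ℝ) < b - a)]
      rw [h2]
      exact mul_le_mul_of_nonneg_right (hg' ξ) (by linarith)
    nlinarith
  have hex : ∃ p : ℝ, g p = p := by
    set a : ℝ := -((max (g 0) 0 + 1)/(μ-1)) with ha
    set b : ℝ := (max (-(g 0)) 0 + 1)/(μ-1) with hb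
    have hμ1 : (0:ℝ) < μ - 1 := by linarith
    have ha0 : a < 0 := by
      rw [ha]; apply neg_neg_iff_pos.mpr; positivity
    have hb0 : 0 < b := by rw [hb]; positivity
    have hga : g a - a ≤ 0 := by
      have := hslope a 0 ha0
      have h1 : (μ-1) * (0 - a) = max (g 0) 0 + 1 := by
        rw [ha]; field_simp; ring
      nlinarith [le_max_left (g 0) 0]
    have hgb2 : 0 ≤ g b - b := by
      have := hslope 0 b hb0
      have h1 : (μ-1) * (b - 0) = max (-(g 0)) 0 + 1 := by
        rw [hb]; field_simp; ring
      nlinarith [le_max_left (-(g 0)) 0]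
    have hcont : ContinuousOn (fun x => g x - x) (Set.Icc a b) :=
      (hg.continuous.sub continuous_id).continuousOn
    have h0mem : (0:ℝ) ∈ Set.Icc (g a - a) (g b - b) := ⟨hga, hgb2⟩
    obtain ⟨p, _, hp⟩ := intermediate_value_Icc (le_of_lt (lt_trans ha0 hb0)) hcont h0mem
    have hp' : g p - p = 0 := hp
    exact ⟨p, by linarith⟩
  obtain ⟨p, hp⟩ := hex
  have hpu : ∀ z, g z = z → z = p := by
    intro z hz
    by_contra hne
    rcases lt_or_gt_of_ne hne with hlt | hlt
    · have := hslope z p hlt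
      rw [hz, hp] at this
      nlinarith
    · have := hslope p z hlt
      rw [hz, hp] at this
      nlinarith
  have hup : u p = p := by
    have := hug p
    rwa [hp] at this
  have hfix : ∀ k : ℕ, u^[k] p = p := by
    intro k
    induction k with
    | zero => rfl
    | succ k IH => rw [Function.iterate_succ_apply', IH, hup]
  -- contraction
  have hLip : ∀ x y : ℝ, |u x - u y| ≤ μ⁻¹ * |x - y| := by
    intro x y
    have h := Convex.norm_image_sub_le_of_norm_deriv_le (s := Set.univ) (f := u)
      (fun t _ => hud t) (fun t _ => by rw [Real.norm_eq_abs]; exact hu_le t)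
      convex_univ (Set.mem_univ y) (Set.mem_univ x)
    simpa [Real.norm_eq_abs] using h
  have hcontr : ∀ (k : ℕ) (x : ℝ), |u^[k] x - p| ≤ (μ⁻¹)^k * |x - p| := by
    intro k
    induction k with
    | zero => intro x; simp
    | succ k IH =>
      intro x
      rw [Function.iterate_succ_apply']
      calc |u (u^[k] x) - p| = |u (u^[k] x) - u p| := by rw [hup]
      _ ≤ μ⁻¹ * |u^[k] x - p| := hLip _ _
      _ ≤ μ⁻¹ * ((μ⁻¹)^k * |x - p|) := by
          exact mul_le_mul_of_nonneg_left (IH x) hq0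
      _ = (μ⁻¹)^(k+1) * |x - p| := by ring
  -- the logarithm of the derivative
  set B : ℝ → ℝ := fun x => Real.log (deriv g x) with hBdef
  have hB : ContDiff ℝ (m:ℕ) B := by
    rw [contDiff_iff_contDiffAt]
    intro x
    exact (Real.contDiffAt_log.mpr (ne_of_gt (hg'pos x))).comp x hgderiv.contDiffAt
  have hBdiff : Differentiable ℝ B :=
    hB.differentiable (by exact_mod_cast (show m ≠ 0 by omega))
  have hgK' : ∀ x, deriv g x ≤ K := fun x =>
    le_trans (le_abs_self _) (by simpa [iteratedDeriv_one] using hgK 1 le_rfl (by omega) x)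
  have hdgK : ∀ i, i ≤ m → ∀ x, |iteratedDeriv i (deriv g) x| ≤ K := by
    intro i hi x
    rcases Nat.eq_zero_or_pos i with h0 | h0
    · subst h0
      simpa [iteratedDeriv_zero, abs_of_pos (hg'pos x)] using hgK' x
    · obtain ⟨j, rfl⟩ : ∃ j, i = j + 1 := ⟨i - 1, by omega⟩
      rw [← iteratedDeriv_succ']
      exact hgK (j+2) (by omega) (by omega) x
  -- uniform bounds on derivatives of B
  obtain ⟨CB, hCB0, hCBb⟩ := my_exists_uniform_bound m
    (fun i => (i ! : ℝ) * (max (Real.log K) (i ! : ℝ)) * (max K 1) ^ i)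
  have hCB : ∀ i, i ≤ m → ∀ x, |iteratedDeriv i B x| ≤ CB := by
    intro i hi x
    refine le_trans ?_ (hCBb i hi)
    have hDi : ∀ j, 1 ≤ j → j ≤ i → ∀ y, |iteratedDeriv j (deriv g) y| ≤ (max K 1) ^ j := by
      intro j h1 h2 y
      calc |iteratedDeriv j (deriv g) y| ≤ K := hdgK j (le_trans h2 hi) y
      _ ≤ max K 1 := le_max_left _ _
      _ ≤ (max K 1) ^ j := le_self_pow₀ (le_max_right _ _) (by omega)
    exact my_log_comp_bound (N := m) hgderiv hi
      (fun y => le_trans hμ.le (hg' y)) hgK' hDi x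
  -- iterates are smooth
  have hUk : ∀ k : ℕ, ContDiff ℝ ((m+1:ℕ)) (u^[k]) := by
    intro k
    induction k with
    | zero => simpa using contDiff_id
    | succ k IH => rw [Function.iterate_succ]; exact IH.comp hu
  have hUkm : ∀ k : ℕ, ContDiff ℝ (m:ℕ) (u^[k]) := fun k =>
    (hUk k).of_le (by exact_mod_cast Nat.le_succ m)
  -- the Birkhoff sums of -B along the inverse iterates
  set wk : ℕ → ℝ → ℝ := fun k x => -∑ i ∈ Finset.range k, B (u^[i+1] x) with hwkdef
  have hBuk : ∀ j : ℕ, ContDiff ℝ (m:ℕ) (fun x => B (u^[j] x)) := fun j =>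
    hB.comp (hUkm j)
  have hwk : ∀ k, ContDiff ℝ (m:ℕ) (wk k) := by
    intro k
    exact (ContDiff.sum fun i _ => hBuk (i+1)).neg
  have hEuk : ∀ (k : ℕ) (x : ℝ), HasDerivAt (u^[k]) (Real.exp (wk k x)) x := by
    intro k
    induction k with
    | zero =>
      intro x
      simpa [hwkdef, Real.exp_zero] using hasDerivAt_id x
    | succ k IH =>
      intro x
      have h1 : HasDerivAt (u^[k]) (Real.exp (wk k (u x))) (u x) := IH (u x)
      have h2 : HasDerivAt (u^[k] ∘ u) (Real.exp (wk k (u x)) * (deriv g (u x))⁻¹) x :=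
        h1.comp x (hDu x)
      rw [← Function.iterate_succ] at h2
      have hinv : (deriv g (u x))⁻¹ = Real.exp (-(B (u x))) := by
        rw [Real.exp_neg, hBdef, Real.exp_log (hg'pos _)]
      have hsum : wk (k+1) x = wk k (u x) + (-(B (u x))) := by
        simp only [hwkdef, Finset.sum_range_succ']
        have hterm : ∀ i : ℕ, B (u^[i+1] (u x)) = B (u^[i+1+1] x) := by
          intro i
          rw [Function.iterate_succ_apply (f := u) (n := i+1) (x := x)]
        simp only [← hterm]
        have : u^[0+1] x = u x := by simp
        rw [this]
        ring
      have hval : Real.exp (wk (k+1) x) = Real.exp (wk k (u x)) * (deriv g (u x))⁻¹ := by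
        rw [hsum, Real.exp_add, hinv]
      rw [hval]
      exact h2
  have hduk : ∀ k, deriv (u^[k]) = fun x => Real.exp (wk k x) :=
    fun k => funext fun x => (hEuk k x).deriv
  have hduk_le : ∀ (k : ℕ) (x : ℝ), Real.exp (wk k x) ≤ (μ⁻¹)^k := by
    intro k x
    have hlog : ∀ y : ℝ, Real.log μ ≤ B y := fun y =>
      Real.log_le_log hμ0 (hg' y)
    have hsum : (k : ℝ) * Real.log μ ≤ ∑ i ∈ Finset.range k, B (u^[i+1] x) := by
      calc (k : ℝ) * Real.log μ = ∑ _i ∈ Finset.range k, Real.log μ := by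
            rw [Finset.sum_const, Finset.card_range]; ring
      _ ≤ _ := Finset.sum_le_sum fun i _ => hlog _
    have hwkle : wk k x ≤ -((k:ℝ) * Real.log μ) := by
      rw [hwkdef]; simp only [neg_le_neg_iff]; exact hsum
    calc Real.exp (wk k x) ≤ Real.exp (-((k:ℝ) * Real.log μ)) := Real.exp_le_exp.mpr hwkle
    _ = (μ⁻¹)^k := by
        rw [Real.exp_neg, Real.exp_nat_mul, Real.exp_log hμ0, ← inv_pow]
  have hduk_pos : ∀ (k : ℕ) (x : ℝ), 0 < deriv (u^[k]) x := by
    intro k x; rw [hduk]; exact Real.exp_pos _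
  -- KEY: geometric bounds for all higher derivatives of the iterates
  have KEY : ∀ n, 1 ≤ n → n ≤ m → ∃ M : ℝ, 1 ≤ M ∧
      (∀ j, 1 ≤ j → j ≤ n → ∀ (k:ℕ) (x:ℝ), |iteratedDeriv j (u^[k]) x| ≤ M * (μ⁻¹)^k) ∧
      (∀ j, 1 ≤ j → j ≤ n → ∀ (k:ℕ) (x:ℝ),
        |iteratedDeriv j (fun y => B (u^[k] y)) x| ≤ M * (μ⁻¹)^k) := by
    intro n hn
    induction n, hn using Nat.le_induction with
    | base =>
      intro _
      refine ⟨max 1 CB, le_max_left _ _, ?_, ?_⟩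
      · intro j h1 h2 k x
        have hj : j = 1 := by omega
        subst hj
        have hh : deriv (u^[k]) x = Real.exp (wk k x) := by rw [hduk]
        rw [iteratedDeriv_one, hh, abs_of_pos (Real.exp_pos _)]
        calc Real.exp (wk k x) ≤ (μ⁻¹)^k := hduk_le k x
        _ ≤ max 1 CB * (μ⁻¹)^k :=
            le_mul_of_one_le_left (pow_nonneg hq0 k) (le_max_left _ _)
      · intro j h1 h2 k x
        have hj : j = 1 := by omega
        subst hj
        have hD1 : HasDerivAt (fun y => B (u^[k] y))
            (deriv B (u^[k] x) * Real.exp (wk k x)) x :=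
          ((hBdiff (u^[k] x)).hasDerivAt).comp x (hEuk k x)
        rw [iteratedDeriv_one, hD1.deriv, abs_mul, abs_of_pos (Real.exp_pos _)]
        have h1' : |deriv B (u^[k] x)| ≤ CB := by
          have := hCB 1 hm (u^[k] x)
          rwa [iteratedDeriv_one] at this
        calc |deriv B (u^[k] x)| * Real.exp (wk k x) ≤ CB * (μ⁻¹)^k :=
            mul_le_mul h1' (hduk_le k x) (Real.exp_pos _).le hCB0
        _ ≤ max 1 CB * (μ⁻¹)^k :=
            mul_le_mul_of_nonneg_right (le_max_right _ _) (pow_nonneg hq0 k)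
    | succ n hn1 IH =>
      intro hnm
      obtain ⟨M, hM1, hIT, hBD⟩ := IH (by omega)
      have hM0 : (0:ℝ) ≤ M := le_trans zero_le_one hM1
      have h1q : (0:ℝ) < 1 - μ⁻¹ := by linarith
      set W : ℝ := M * (μ⁻¹ * (1 - μ⁻¹)⁻¹) with hWdef
      have hW0 : 0 ≤ W := by
        apply mul_nonneg hM0 (mul_nonneg hq0 (le_of_lt (inv_pos.mpr h1q)))
      set D : ℝ := max 1 W with hDdef
      have hD1 : (1:ℝ) ≤ D := le_max_left _ _
      have hD0 : (0:ℝ) ≤ D := le_trans zero_le_one hD1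
      -- uniform bounds for the derivatives of the Birkhoff sums
      have hwkb : ∀ s, 1 ≤ s → s ≤ n → ∀ (k:ℕ) (x:ℝ), |iteratedDeriv s (wk k) x| ≤ W := by
        intro s h1 h2 k x
        have hsm : ((s:ℕ) : WithTop ℕ∞) ≤ ((m:ℕ) : WithTop ℕ∞) := by
          exact_mod_cast (by omega : s ≤ m)
        have hcds : ∀ i : ℕ, ContDiff ℝ (s:ℕ) (fun y => B (u^[i+1] y)) :=
          fun i => (hBuk (i+1)).of_le hsm
        have hrw : wk k = fun y => (-1:ℝ) * ∑ i ∈ Finset.range k, B (u^[i+1] y) := by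
          funext y; simp [hwkdef]
        rw [hrw, my_itd_const_mul (ContDiff.sum fun i _ => hcds i) (-1) x,
          abs_mul, abs_neg, abs_one, one_mul,
          my_itd_sum (Finset.range k) (fun i y => B (u^[i+1] y)) (fun i _ => hcds i) x]
        calc |∑ i ∈ Finset.range k, iteratedDeriv s (fun y => B (u^[i+1] y)) x|
            ≤ ∑ i ∈ Finset.range k, |iteratedDeriv s (fun y => B (u^[i+1] y)) x| :=
              Finset.abs_sum_le_sum_abs _ _
        _ ≤ ∑ i ∈ Finset.range k, M * (μ⁻¹)^(i+1) :=
              Finset.sum_le_sum fun i _ => hBD s h1 h2 (i+1) x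
        _ = M * ∑ i ∈ Finset.range k, (μ⁻¹)^(i+1) := by rw [Finset.mul_sum]
        _ ≤ M * (μ⁻¹ * (1 - μ⁻¹)⁻¹) :=
              mul_le_mul_of_nonneg_left (my_geom_bound hq0 hq1 k) hM0
      -- bounds for the derivatives of exp ∘ wk
      have hexpb : ∀ s, s ≤ n → ∀ (k:ℕ) (x:ℝ),
          |iteratedDeriv s (Real.exp ∘ (wk k)) x| ≤ (s ! : ℝ) * ((μ⁻¹)^k) * D ^ s := by
        intro s hs k x
        apply my_comp_bound (N := m) Real.contDiff_exp (hwk k) (by omega) x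
        · intro i _
          rw [my_iteratedDeriv_exp, abs_of_pos (Real.exp_pos _)]
          exact hduk_le k x
        · intro i h1 h2
          calc |iteratedDeriv i (wk k) x| ≤ W := hwkb i h1 (le_trans h2 hs) k x
          _ ≤ D := le_max_right _ _
          _ ≤ D ^ i := le_self_pow₀ hD1 (by omega)
      -- new bound for the iterates at order n+1
      have hITnew : ∀ (k:ℕ) (x:ℝ),
          |iteratedDeriv (n+1) (u^[k]) x| ≤ ((n ! : ℝ) * D ^ n) * (μ⁻¹)^k := by
        intro k x
        rw [iteratedDeriv_succ', hduk]
        have hfn : (fun x => Real.exp (wk k x)) = Real.exp ∘ (wk k) := rfl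
        rw [hfn]
        exact le_trans (hexpb n le_rfl k x) (le_of_eq (by ring))
      -- derivative of B is (m-1)-smooth
      have hcast : (((m-1:ℕ):WithTop ℕ∞)+1) = ((m:ℕ):WithTop ℕ∞) := by
        have h' : m - 1 + 1 = m := by omega
        rw [← h']
        push_cast
        ring
      have hB' : ContDiff ℝ ((m-1:ℕ)) (deriv B) := by
        have h1 : ContDiff ℝ (((m-1:ℕ):WithTop ℕ∞)+1) B := by rw [hcast]; exact hB
        exact (contDiff_succ_iff_deriv.mp h1).2.2
      have hm1cast : ((m-1:ℕ) : WithTop ℕ∞) ≤ ((m:ℕ) : WithTop ℕ∞) := by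
        exact_mod_cast (by omega : m - 1 ≤ m)
      -- bounds for derivatives of (deriv B) ∘ u^[k]
      have hdBb : ∀ i, i ≤ n → ∀ (k:ℕ) (x:ℝ),
          |iteratedDeriv i (fun y => deriv B (u^[k] y)) x| ≤ (n ! : ℝ) * CB * M ^ n := by
        intro i hi k x
        have hfn : (fun y => deriv B (u^[k] y)) = (deriv B) ∘ (u^[k]) := rfl
        rw [hfn]
        have h := my_comp_bound (N := m-1) hB' ((hUkm k).of_le hm1cast)
          (by omega : i ≤ m - 1) x (C := CB) (D := M) ?_ ?_
        · refine le_trans h ?_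
          have e1 : (i ! : ℝ) ≤ (n ! : ℝ) := by
            exact_mod_cast Nat.factorial_le hi
          have e2 : M ^ i ≤ M ^ n := pow_le_pow_right₀ hM1 hi
          have e3 : (0:ℝ) ≤ (i ! : ℝ) := by positivity
          calc (i ! : ℝ) * CB * M ^ i ≤ (i ! : ℝ) * CB * M ^ n := by
                exact mul_le_mul_of_nonneg_left e2 (mul_nonneg e3 hCB0)
          _ ≤ (n ! : ℝ) * CB * M ^ n := by
                apply mul_le_mul_of_nonneg_right _ (by positivity)
                exact mul_le_mul_of_nonneg_right e1 hCB0
        · intro t ht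
          rw [← iteratedDeriv_succ']
          exact hCB (t+1) (by omega) _
        · intro t h1 h2
          calc |iteratedDeriv t (u^[k]) x| ≤ M * (μ⁻¹)^k := hIT t h1 (by omega) k x
          _ ≤ M * 1 := by
              apply mul_le_mul_of_nonneg_left _ hM0
              exact pow_le_one₀ hq0 (le_of_lt hq1)
          _ = M := mul_one M
          _ ≤ M ^ t := le_self_pow₀ hM1 (by omega)
      -- new bound for B ∘ u^[k] at order n+1
      set M2 : ℝ := 2^n * ((n ! : ℝ) * CB * M ^ n) * ((n ! : ℝ) * D ^ n) with hM2def
      have hBDnew : ∀ (k:ℕ) (x:ℝ),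
          |iteratedDeriv (n+1) (fun y => B (u^[k] y)) x| ≤ M2 * (μ⁻¹)^k := by
        intro k x
        have hder : deriv (fun y => B (u^[k] y))
            = fun y => (fun z => deriv B (u^[k] z)) y * (fun z => Real.exp (wk k z)) y := by
          funext y
          exact (((hBdiff (u^[k] y)).hasDerivAt).comp y (hEuk k y)).deriv
        rw [iteratedDeriv_succ', hder]
        have hf1 : ContDiff ℝ ((m-1:ℕ)) (fun y => deriv B (u^[k] y)) :=
          hB'.comp ((hUkm k).of_le hm1cast)
        have hf2 : ContDiff ℝ ((m-1:ℕ)) (fun y => Real.exp (wk k y)) :=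
          Real.contDiff_exp.comp ((hwk k).of_le hm1cast)
        refine le_trans (my_mul_bound hf1 hf2 (by omega : n ≤ m - 1) x) ?_
        have hsummand : ∀ i ∈ Finset.range (n+1),
            (n.choose i : ℝ) * |iteratedDeriv i (fun y => deriv B (u^[k] y)) x|
              * |iteratedDeriv (n-i) (fun y => Real.exp (wk k y)) x|
            ≤ (n.choose i : ℝ) * (((n ! : ℝ) * CB * M ^ n) * (((n ! : ℝ) * D ^ n) * (μ⁻¹)^k)) := by
          intro i hi
          rw [Finset.mem_range] at hi
          have e1 := hdBb i (by omega) k x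
          have e2 : |iteratedDeriv (n-i) (fun y => Real.exp (wk k y)) x|
              ≤ ((n ! : ℝ) * D ^ n) * (μ⁻¹)^k := by
            have hfn : (fun y => Real.exp (wk k y)) = Real.exp ∘ (wk k) := rfl
            rw [hfn]
            refine le_trans (hexpb (n-i) (by omega) k x) ?_
            have e3 : ((n-i) ! : ℝ) ≤ (n ! : ℝ) := by
              exact_mod_cast Nat.factorial_le (by omega : n - i ≤ n)
            have e4 : D ^ (n-i) ≤ D ^ n := pow_le_pow_right₀ hD1 (by omega)
            calc ((n-i) ! : ℝ) * ((μ⁻¹)^k) * D ^ (n-i)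
                ≤ (n ! : ℝ) * ((μ⁻¹)^k) * D ^ n := by
                  apply mul_le_mul
                  · exact mul_le_mul_of_nonneg_right e3 (pow_nonneg hq0 k)
                  · exact e4
                  · positivity
                  · positivity
            _ = ((n ! : ℝ) * D ^ n) * (μ⁻¹)^k := by ring
          rw [mul_assoc]
          apply mul_le_mul_of_nonneg_left _ (by positivity)
          exact mul_le_mul e1 e2 (abs_nonneg _) (by positivity)
        refine le_trans (Finset.sum_le_sum hsummand) ?_
        rw [← Finset.sum_mul]
        have hchoose : ∑ i ∈ Finset.range (n+1), (n.choose i : ℝ) = 2^n := by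
          rw [← Nat.cast_sum]
          rw [Nat.sum_range_choose]
          push_cast
          ring
        rw [hchoose, hM2def]
        exact le_of_eq (by ring)
      -- combine
      refine ⟨max M (max ((n ! : ℝ) * D ^ n) M2), le_trans hM1 (le_max_left _ _), ?_, ?_⟩
      · intro j h1 h2 k x
        rcases Nat.lt_or_ge j (n+1) with hj | hj
        · refine le_trans (hIT j h1 (by omega) k x) ?_
          exact mul_le_mul_of_nonneg_right (le_max_left _ _) (pow_nonneg hq0 k)
        · have hj' : j = n + 1 := by omega
          subst hj'
          refine le_trans (hITnew k x) ?_
          apply mul_le_mul_of_nonneg_right _ (pow_nonneg hq0 k)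
          exact le_trans (le_max_left _ _) (le_max_right _ _)
      · intro j h1 h2 k x
        rcases Nat.lt_or_ge j (n+1) with hj | hj
        · refine le_trans (hBD j h1 (by omega) k x) ?_
          exact mul_le_mul_of_nonneg_right (le_max_left _ _) (pow_nonneg hq0 k)
        · have hj' : j = n + 1 := by omega
          subst hj'
          refine le_trans (hBDnew k x) ?_
          apply mul_le_mul_of_nonneg_right _ (pow_nonneg hq0 k)
          exact le_trans (le_max_right _ _) (le_max_right _ _)
  obtain ⟨M, hM1, hITER, hBND⟩ := KEY m hm le_rfl
  have hM0 : (0:ℝ) ≤ M := le_trans zero_le_one hM1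
  have h1q : (0:ℝ) < 1 - μ⁻¹ := by linarith
  have hcastO : (((m-1:ℕ):WithTop ℕ∞)+1) = ((m:ℕ):WithTop ℕ∞) := by
    have h' : m - 1 + 1 = m := by omega
    rw [← h']
    push_cast
    ring
  have hB'O : ContDiff ℝ ((m-1:ℕ)) (deriv B) := by
    have h1 : ContDiff ℝ (((m-1:ℕ):WithTop ℕ∞)+1) B := by rw [hcastO]; exact hB
    exact (contDiff_succ_iff_deriv.mp h1).2.2
  have hm1castO : ((m-1:ℕ) : WithTop ℕ∞) ≤ ((m:ℕ) : WithTop ℕ∞) := by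
    exact_mod_cast (by omega : m - 1 ≤ m)
  -- Lipschitz bound for B
  have hBLip : ∀ a b : ℝ, |B a - B b| ≤ CB * |a - b| := by
    intro a b
    have h := Convex.norm_image_sub_le_of_norm_deriv_le (s := Set.univ) (f := B)
      (fun t _ => hBdiff t)
      (fun t _ => by
        rw [Real.norm_eq_abs, ← iteratedDeriv_one]
        exact hCB 1 hm t)
      convex_univ (Set.mem_univ b) (Set.mem_univ a)
    simpa [Real.norm_eq_abs] using h
  set θ : ℕ → ℝ → ℝ := fun k x => B (u^[k+1] x) - B p with hθdef
  have hθb : ∀ (k : ℕ) (x : ℝ), |θ k x| ≤ (CB * |x - p|) * (μ⁻¹)^(k+1) := by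
    intro k x
    have h1 : θ k x = B (u^[k+1] x) - B (u^[k+1] p) := by
      simp only [hθdef, hfix (k+1)]
    rw [h1]
    calc |B (u^[k+1] x) - B (u^[k+1] p)| ≤ CB * |u^[k+1] x - u^[k+1] p| := hBLip _ _
    _ ≤ CB * ((μ⁻¹)^(k+1) * |x - p|) := by
        apply mul_le_mul_of_nonneg_left _ hCB0
        rw [hfix (k+1)]
        exact hcontr (k+1) x
    _ = (CB * |x - p|) * (μ⁻¹)^(k+1) := by ring
  have hgeo1 : Summable (fun k : ℕ => (μ⁻¹)^(k+1)) := by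
    have h := (summable_geometric_of_lt_one hq0 hq1).mul_right μ⁻¹
    simpa [pow_succ] using h
  have hθsum : ∀ x, Summable (fun k => θ k x) := by
    intro x
    exact Summable.of_norm_bounded (hgeo1.mul_left (CB * |x - p|))
      (fun k => by rw [Real.norm_eq_abs]; exact hθb k x)
  set Psi : ℝ → ℝ := fun x => ∑' k, θ k x with hPsidef
  have hPsis : ∀ x, Filter.Tendsto (fun n => ∑ k ∈ Finset.range n, θ k x)
      Filter.atTop (nhds (Psi x)) := fun x => ((hθsum x).hasSum).tendsto_sum_nat
  set τ : ℕ → ℝ → ℝ := fun k x => deriv B (u^[k+1] x) * Real.exp (wk (k+1) x) with hτdef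
  have hθD : ∀ (k : ℕ) (x : ℝ), HasDerivAt (θ k) (τ k x) x := by
    intro k x
    have h1 : HasDerivAt (fun y => B (u^[k+1] y))
        (deriv B (u^[k+1] x) * Real.exp (wk (k+1) x)) x :=
      ((hBdiff (u^[k+1] x)).hasDerivAt).comp x (hEuk (k+1) x)
    simpa [hθdef, hτdef] using h1.sub_const (B p)
  have hτb : ∀ (k : ℕ) (x : ℝ), ‖τ k x‖ ≤ (CB * μ⁻¹) * (μ⁻¹)^k := by
    intro k x
    rw [Real.norm_eq_abs]
    have h2 : τ k x = deriv B (u^[k+1] x) * Real.exp (wk (k+1) x) := rfl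
    rw [h2, abs_mul, abs_of_pos (Real.exp_pos _)]
    have h1 : |deriv B (u^[k+1] x)| ≤ CB := by
      rw [← iteratedDeriv_one]; exact hCB 1 hm _
    calc |deriv B (u^[k+1] x)| * Real.exp (wk (k+1) x) ≤ CB * (μ⁻¹)^(k+1) :=
        mul_le_mul h1 (hduk_le (k+1) x) (Real.exp_pos _).le hCB0
    _ = (CB * μ⁻¹) * (μ⁻¹)^k := by ring
  have hgeoC : Summable (fun k : ℕ => (CB * μ⁻¹) * (μ⁻¹)^k) :=
    (summable_geometric_of_lt_one hq0 hq1).mul_left _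
  have hθsum0 : Summable (fun k => θ k p) := by
    have hz : ∀ k : ℕ, θ k p = 0 := fun k => by
      show B (u^[k+1] p) - B p = 0
      rw [hfix (k+1), sub_self]
    simpa [funext hz] using (summable_zero : Summable (fun _ : ℕ => (0:ℝ)))
  have hPsiD : ∀ x, HasDerivAt Psi (∑' k, τ k x) x := fun x =>
    hasDerivAt_tsum hgeoC (fun k y => hθD k y) (fun k y => hτb k y) hθsum0 x
  set T : ℝ → ℝ := fun x => ∑' k, τ k x with hTdef
  have hτcd : ∀ k, ContDiff ℝ ((m-1:ℕ)) (τ k) := fun k =>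
    (hB'O.comp ((hUkm (k+1)).of_le hm1castO)).mul
      (Real.contDiff_exp.comp ((hwk (k+1)).of_le hm1castO))
  have hτderiv : ∀ k, τ k = deriv (fun y => B (u^[k+1] y)) := by
    intro k
    funext y
    exact ((((hBdiff (u^[k+1] y)).hasDerivAt).comp y (hEuk (k+1) y)).deriv).symm
  have hτitd : ∀ (s k : ℕ) (x : ℝ), s ≤ m - 1 →
      |iteratedDeriv s (τ k) x| ≤ (M * μ⁻¹) * (μ⁻¹)^k := by
    intro s k x hs
    rw [hτderiv k, ← iteratedDeriv_succ']
    calc |iteratedDeriv (s+1) (fun y => B (u^[k+1] y)) x| ≤ M * (μ⁻¹)^(k+1) :=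
        hBND (s+1) (by omega) (by omega) (k+1) x
    _ = (M * μ⁻¹) * (μ⁻¹)^k := by ring
  have hvsum : ∀ s : ℕ, ((s:ℕ∞) ≤ ((m-1:ℕ):ℕ∞)) →
      Summable (fun k : ℕ => (M * μ⁻¹) * (μ⁻¹)^k) :=
    fun _ _ => (summable_geometric_of_lt_one hq0 hq1).mul_left _
  have hvb : ∀ (s : ℕ) (k : ℕ) (x : ℝ), ((s:ℕ∞) ≤ ((m-1:ℕ):ℕ∞)) →
      ‖iteratedFDeriv ℝ s (τ k) x‖ ≤ (M * μ⁻¹) * (μ⁻¹)^k := by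
    intro s k x hs
    rw [norm_iteratedFDeriv_eq_norm_iteratedDeriv, Real.norm_eq_abs]
    exact hτitd s k x (by exact_mod_cast hs)
  have hTcd : ContDiff ℝ ((m-1:ℕ)) T := by
    have h := contDiff_tsum (𝕜 := ℝ) (f := τ) (N := ((m-1:ℕ):ℕ∞))
      (v := fun _ k => (M * μ⁻¹) * (μ⁻¹)^k) (fun k => by exact_mod_cast hτcd k)
      hvsum hvb
    exact_mod_cast h
  have hTitd : ∀ s, s ≤ m - 1 → ∀ x, |iteratedDeriv s T x| ≤ (M * μ⁻¹) * (1 - μ⁻¹)⁻¹ := by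
    intro s hs x
    have happ := iteratedFDeriv_tsum_apply (𝕜 := ℝ) (f := τ) (N := ((m-1:ℕ):ℕ∞))
      (v := fun _ k => (M * μ⁻¹) * (μ⁻¹)^k) (fun k => by exact_mod_cast hτcd k)
      hvsum hvb (k := s) (by exact_mod_cast hs) x
    have hnorm : |iteratedDeriv s T x| = ‖iteratedFDeriv ℝ s T x‖ := by
      rw [norm_iteratedFDeriv_eq_norm_iteratedDeriv, Real.norm_eq_abs]
    rw [hnorm, happ]
    have hsum1 : Summable (fun k => ‖iteratedFDeriv ℝ s (τ k) x‖) :=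
      Summable.of_nonneg_of_le (fun k => norm_nonneg _) (fun k => hvb s k x (by exact_mod_cast hs))
        ((summable_geometric_of_lt_one hq0 hq1).mul_left _)
    calc ‖∑' k, iteratedFDeriv ℝ s (τ k) x‖ ≤ ∑' k, ‖iteratedFDeriv ℝ s (τ k) x‖ :=
        norm_tsum_le_tsum_norm hsum1
    _ ≤ ∑' k : ℕ, (M * μ⁻¹) * (μ⁻¹)^k :=
        Summable.tsum_le_tsum (fun k => hvb s k x (by exact_mod_cast hs)) hsum1
          ((summable_geometric_of_lt_one hq0 hq1).mul_left _)
    _ = (M * μ⁻¹) * (1 - μ⁻¹)⁻¹ := by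
        rw [tsum_mul_left, tsum_geometric_of_lt_one hq0 hq1]
  have hderivPsi : deriv Psi = T := funext fun x => (hPsiD x).deriv
  have hPsiCD : ContDiff ℝ (m:ℕ) Psi := by
    rw [show ((m:ℕ):WithTop ℕ∞) = (((m-1:ℕ):WithTop ℕ∞)+1) from hcastO.symm]
    refine contDiff_succ_iff_deriv.mpr ⟨fun x => (hPsiD x).differentiableAt,
      by intro hh; exact absurd hh (by simp), ?_⟩
    rw [hderivPsi]
    exact hTcd
  have hPsid : ∀ j, 1 ≤ j → j ≤ m → ∃ c : ℝ, ∀ x, |iteratedDeriv j Psi x| ≤ c := by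
    intro j h1 h2
    refine ⟨(M * μ⁻¹) * (1 - μ⁻¹)⁻¹, fun x => ?_⟩
    obtain ⟨s, rfl⟩ : ∃ s, j = s + 1 := ⟨j-1, by omega⟩
    rw [iteratedDeriv_succ', hderivPsi]
    exact hTitd s (by omega) x
  exact ⟨⟨u, p, Psi, hgu, hug, hp, hpu, hcontr, hPsiCD, hPsid, fun x => hPsis x⟩⟩







set_option maxHeartbeats 1000000 in
/-- One-dimensional bootstrap of regularity for conjugacies of uniformly expanding
maps of the line: a `C¹` conjugacy with derivative bounded away from `0` and `∞`
between two uniformly `C^r` uniformly expanding diffeomorphisms is `C^r` with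
uniformly bounded derivatives. -/
theorem one_dimensional_bootstrap (r : ℕ) (hr : 2 ≤ r) (μ K : ℝ)
    (hμ : 1 < μ) (hK : 0 < K)
    (f g : ℝ → ℝ)
    (hf : ContDiff ℝ r f) (hg : ContDiff ℝ r g)
    (hfb : Function.Bijective f) (hgb : Function.Bijective g)
    (hg' : ∀ x, μ ≤ deriv g x) (hf' : ∀ x, μ ≤ deriv f x)
    (hgK : ∀ j, 1 ≤ j → j ≤ r → ∀ x, |iteratedDeriv j g x| ≤ K)
    (hfK : ∀ j, 1 ≤ j → j ≤ r → ∀ x, |iteratedDeriv j f x| ≤ K)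
    (h : ℝ → ℝ) (hh : ContDiff ℝ 1 h) (hhb : Function.Bijective h)
    (hconj : ∀ x, h (g x) = f (h x))
    (c C : ℝ) (hc : 0 < c) (hcC : c ≤ C)
    (hh' : ∀ x, c ≤ deriv h x ∧ deriv h x ≤ C) :
    ContDiff ℝ r h ∧
    ∀ j, 1 ≤ j → j ≤ r → ∃ K' : ℝ, ∀ x, |iteratedDeriv j h x| ≤ K' := by
  obtain ⟨m, rfl⟩ : ∃ m, r = m + 1 := ⟨r - 1, by omega⟩
  have hm : 1 ≤ m := by omega
  have hμ0 : (0:ℝ) < μ := lt_trans one_pos hμ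
  have hq0 : (0:ℝ) ≤ μ⁻¹ := inv_nonneg.mpr hμ0.le
  have hq1 : μ⁻¹ < 1 := by rw [inv_lt_one_iff₀]; right; exact hμ
  obtain ⟨Pg⟩ := myPack_exists hm hμ hK hg hgb hg' hgK
  obtain ⟨Pf⟩ := myPack_exists hm hμ hK hf hfb hf' hfK
  set u := Pg.u with hu_def
  set p := Pg.p with hp_def
  set Ψ := Pg.Psi with hΨ_def
  set v := Pf.u with hv_def
  set q := Pf.p with hq_def
  set Φ := Pf.Psi with hΦ_def
  have hhd : Differentiable ℝ h := hh.differentiable one_ne_zero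
  have hfd : Differentiable ℝ f := hf.differentiable (by simp)
  have hgd : Differentiable ℝ g := hg.differentiable (by simp)
  have hd'pos : ∀ x, 0 < deriv h x := fun x => lt_of_lt_of_le hc (hh' x).1
  have hgpos : ∀ x, 0 < deriv g x := fun x => lt_of_lt_of_le hμ0 (hg' x)
  have hfpos : ∀ x, 0 < deriv f x := fun x => lt_of_lt_of_le hμ0 (hf' x)
  -- transported conjugacy
  have hvh : ∀ x, h (u x) = v (h x) := by
    intro x
    have h1 : h x = f (h (u x)) := by
      conv_lhs => rw [← Pg.hgu x]
      exact hconj (u x)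
    have h2 : v (h x) = v (f (h (u x))) := by rw [← h1]
    have h3 : v (f (h (u x))) = h (u x) := Pf.hug _
    rw [h2, h3]
  have hvhk : ∀ (k : ℕ) (x : ℝ), h (u^[k] x) = v^[k] (h x) := by
    intro k
    induction k with
    | zero => intro x; rfl
    | succ k IH =>
      intro x
      rw [Function.iterate_succ_apply', Function.iterate_succ_apply', hvh, IH]
  have hqq : h p = q := by
    apply Pf.hpu
    have := hconj p
    rw [Pg.hp] at this
    exact this.symm
  -- chain rule identity
  have hcomp : (fun x => h (g x)) = (fun x => f (h x)) := funext hconj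
  have hchain : ∀ t, deriv h (g t) * deriv g t = deriv f (h t) * deriv h t := by
    intro t
    have h1 : HasDerivAt (fun x => h (g x)) (deriv h (g t) * deriv g t) t :=
      ((hhd (g t)).hasDerivAt).comp t ((hgd t).hasDerivAt)
    have h2 : HasDerivAt (fun x => f (h x)) (deriv f (h t) * deriv h t) t :=
      ((hfd (h t)).hasDerivAt).comp t ((hhd t).hasDerivAt)
    rw [hcomp] at h1
    exact h1.unique h2
  have hgfp : deriv g p = deriv f q := by
    have h1 := hchain p
    rw [Pg.hp, hqq] at h1
    have hne : deriv h p ≠ 0 := ne_of_gt (hd'pos p)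
    apply mul_left_cancel₀ hne
    linear_combination h1
  -- the log-derivative of h
  set w : ℝ → ℝ := fun x => Real.log (deriv h x) with hwdef
  have hwcont : Continuous (deriv h) := hh.continuous_deriv le_rfl
  have hwc : ∀ x, ContinuousAt w x := fun x =>
    (Real.continuousAt_log (ne_of_gt (hd'pos x))).comp hwcont.continuousAt
  have hstep : ∀ y, w y = w (u y)
      + (Real.log (deriv f (h (u y))) - Real.log (deriv g (u y))) := by
    intro y
    have h1 := hchain (u y)
    rw [Pg.hgu y] at h1
    have l1 : Real.log (deriv h y) + Real.log (deriv g (u y))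
        = Real.log (deriv f (h (u y))) + Real.log (deriv h (u y)) := by
      rw [← Real.log_mul (ne_of_gt (hd'pos y)) (ne_of_gt (hgpos (u y))),
        ← Real.log_mul (ne_of_gt (hfpos (h (u y)))) (ne_of_gt (hd'pos (u y))), h1]
    show Real.log (deriv h y) = Real.log (deriv h (u y)) + _
    linarith
  have htel : ∀ (n : ℕ) (x : ℝ), w x = w (u^[n] x) + ∑ k ∈ Finset.range n,
      (Real.log (deriv f (h (u^[k+1] x))) - Real.log (deriv g (u^[k+1] x))) := by
    intro n
    induction n with
    | zero => intro x; simp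
    | succ n IH =>
      intro x
      rw [Finset.sum_range_succ]
      have hs := hstep (u^[n] x)
      rw [← Function.iterate_succ_apply' u n x] at hs
      rw [IH x]
      linarith
  have htel2 : ∀ (n : ℕ) (x : ℝ), w x - w (u^[n] x)
      = (∑ k ∈ Finset.range n, (Real.log (deriv f (v^[k+1] (h x))) - Real.log (deriv f q)))
        - (∑ k ∈ Finset.range n, (Real.log (deriv g (u^[k+1] x)) - Real.log (deriv g p))) := by
    intro n x
    have h1 := htel n x
    have e1 : ∑ k ∈ Finset.range n, (Real.log (deriv f (v^[k+1] (h x))) - Real.log (deriv f q))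
        = ∑ k ∈ Finset.range n, (Real.log (deriv f (h (u^[k+1] x))) - Real.log (deriv g p)) := by
      refine Finset.sum_congr rfl fun k _ => ?_
      rw [hvhk, hgfp]
    rw [e1]
    simp only [Finset.sum_sub_distrib] at h1 ⊢
    linarith
  -- limits
  have hulim : ∀ x, Filter.Tendsto (fun n => u^[n] x) Filter.atTop (nhds p) := by
    intro x
    have h1 : Filter.Tendsto (fun n : ℕ => (μ⁻¹)^n * |x - p|) Filter.atTop (nhds 0) := by
      simpa using (tendsto_pow_atTop_nhds_zero_of_lt_one hq0 hq1).mul_const |x - p|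
    have h2 : Filter.Tendsto (fun n => |u^[n] x - p|) Filter.atTop (nhds 0) :=
      squeeze_zero (fun n => abs_nonneg _) (fun n => Pg.hcontr n x) h1
    rw [tendsto_iff_dist_tendsto_zero]
    simpa [Real.dist_eq] using h2
  have hiden : ∀ x, w x - w p = Φ (h x) - Ψ x := by
    intro x
    have hlim1 : Filter.Tendsto (fun n => w x - w (u^[n] x)) Filter.atTop
        (nhds (w x - w p)) :=
      tendsto_const_nhds.sub (((hwc p).tendsto).comp (hulim x))
    have hlim2 : Filter.Tendsto (fun n => w x - w (u^[n] x)) Filter.atTop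
        (nhds (Φ (h x) - Ψ x)) := by
      have h3 := (Pf.hPsis (h x)).sub (Pg.hPsis x)
      exact Filter.Tendsto.congr (fun n => (htel2 n x).symm) h3
    exact tendsto_nhds_unique hlim1 hlim2
  set c0 : ℝ := deriv h p with hc0
  have hc0pos : 0 < c0 := hd'pos p
  have hdh : deriv h = fun x => c0 * Real.exp (Φ (h x) - Ψ x) := by
    funext x
    have h1 : Real.exp (w x) = deriv h x := Real.exp_log (hd'pos x)
    have h2 : Real.exp (w p) = c0 := Real.exp_log hc0pos
    have h3 : w x = w p + (Φ (h x) - Ψ x) := by linarith [hiden x]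
    rw [← h1, h3, Real.exp_add, h2]
  -- bootstrap of smoothness
  have hboot : ∀ k : ℕ, 1 ≤ k → k ≤ m+1 → ContDiff ℝ (k:ℕ) h := by
    intro k hk1
    induction k, hk1 using Nat.le_induction with
    | base => intro _; exact_mod_cast hh
    | succ k hk IH =>
      intro hkm
      have hk' : ContDiff ℝ (k:ℕ) h := IH (by omega)
      have hkm' : ((k:ℕ):WithTop ℕ∞) ≤ ((m:ℕ):WithTop ℕ∞) := by
        exact_mod_cast (by omega : k ≤ m)
      have hΦh : ContDiff ℝ (k:ℕ) (fun x => Φ (h x)) := (Pf.hPsi.of_le hkm').comp hk'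
      have hΨ' : ContDiff ℝ (k:ℕ) Ψ := Pg.hPsi.of_le hkm'
      have hdc : ContDiff ℝ (k:ℕ) (deriv h) := by
        rw [hdh]
        exact contDiff_const.mul (Real.contDiff_exp.comp (hΦh.sub hΨ'))
      have hfin : ContDiff ℝ ((k:WithTop ℕ∞)+1) h :=
        contDiff_succ_iff_deriv.mpr ⟨hhd, by intro hh2; exact absurd hh2 (by simp), hdc⟩
      exact_mod_cast hfin
  have hCD : ContDiff ℝ ((m+1:ℕ)) h := hboot (m+1) (by omega) le_rfl
  refine ⟨hCD, ?_⟩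
  -- uniform bounds on the derivatives of Φ and Ψ
  have hgetb : ∀ (F : ℝ → ℝ), (∀ j, 1 ≤ j → j ≤ m → ∃ cc : ℝ, ∀ x, |iteratedDeriv j F x| ≤ cc) →
      ∃ CF : ℝ, 0 ≤ CF ∧ ∀ j, 1 ≤ j → j ≤ m → ∀ x, |iteratedDeriv j F x| ≤ CF := by
    intro F hF
    have H : ∀ j : ℕ, ∃ cc : ℝ, ∀ x, (1 ≤ j → j ≤ m → |iteratedDeriv j F x| ≤ cc) := by
      intro j
      by_cases hj : 1 ≤ j ∧ j ≤ m
      · obtain ⟨cc, hcc⟩ := hF j hj.1 hj.2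
        exact ⟨cc, fun x _ _ => hcc x⟩
      · exact ⟨0, fun x h1 h2 => absurd ⟨h1, h2⟩ hj⟩
    choose cfn hcfn using H
    obtain ⟨CF, hCF0, hCFb⟩ := my_exists_uniform_bound m cfn
    exact ⟨CF, hCF0, fun j h1 h2 x => le_trans (hcfn j x h1 h2) (hCFb j h2)⟩
  obtain ⟨CΦ, hCΦ0, hCΦ⟩ := hgetb Φ Pf.hPsid
  obtain ⟨CΨ, hCΨ0, hCΨ⟩ := hgetb Ψ Pg.hPsid
  -- smoothness data
  have hcastO : (((m-1:ℕ):WithTop ℕ∞)+1) = ((m:ℕ):WithTop ℕ∞) := by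
    have h' : m - 1 + 1 = m := by omega
    rw [← h']
    push_cast
    ring
  have hm1le : ((m-1:ℕ) : WithTop ℕ∞) ≤ ((m:ℕ) : WithTop ℕ∞) := by
    exact_mod_cast (by omega : m - 1 ≤ m)
  have hmle : ((m:ℕ) : WithTop ℕ∞) ≤ ((m+1:ℕ) : WithTop ℕ∞) := by
    exact_mod_cast (by omega : m ≤ m + 1)
  have hCm : ContDiff ℝ (m:ℕ) h := hCD.of_le hmle
  have hCm1 : ContDiff ℝ ((m-1:ℕ)) h := hCm.of_le hm1le
  have hΦ' : ContDiff ℝ ((m-1:ℕ)) (deriv Φ) := by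
    have h1 : ContDiff ℝ (((m-1:ℕ):WithTop ℕ∞)+1) Φ := by rw [hcastO]; exact Pf.hPsi
    exact (contDiff_succ_iff_deriv.mp h1).2.2
  have hdH : ContDiff ℝ (m:ℕ) (deriv h) := by
    have h1 : ContDiff ℝ (((m:ℕ):WithTop ℕ∞)+1) h := by
      have : (((m:ℕ):WithTop ℕ∞)+1) = ((m+1:ℕ):WithTop ℕ∞) := by push_cast; ring
      rw [this]; exact hCD
    exact (contDiff_succ_iff_deriv.mp h1).2.2
  -- derivative bounds by strong induction
  have hmain : ∀ j, 1 ≤ j → j ≤ m+1 →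
      ∃ N : ℝ, 1 ≤ N ∧ ∀ i, 1 ≤ i → i ≤ j → ∀ x, |iteratedDeriv i h x| ≤ N := by
    intro j hj1
    induction j, hj1 using Nat.le_induction with
    | base =>
      intro _
      refine ⟨max 1 C, le_max_left _ _, fun i h1 h2 x => ?_⟩
      have hi : i = 1 := by omega
      subst hi
      rw [iteratedDeriv_one, abs_of_pos (hd'pos x)]
      exact le_trans (hh' x).2 (le_max_right _ _)
    | succ j hj IH =>
      intro hjm
      obtain ⟨N, hN1, hNb⟩ := IH (by omega)
      have hN0 : (0:ℝ) ≤ N := le_trans zero_le_one hN1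
      set DN : ℝ := max 1 N with hDN
      have hDN1 : (1:ℝ) ≤ DN := le_max_left _ _
      -- bounds on derivatives of (deriv Φ) ∘ h
      have hΦ'h : ∀ i, i ≤ j - 1 → ∀ x,
          |iteratedDeriv i (fun y => deriv Φ (h y)) x| ≤ (j ! : ℝ) * CΦ * DN ^ j := by
        intro i hi x
        have hfn : (fun y => deriv Φ (h y)) = (deriv Φ) ∘ h := rfl
        rw [hfn]
        have hb := my_comp_bound (N := m-1) hΦ' hCm1 (by omega : i ≤ m - 1) x
          (C := CΦ) (D := DN) ?_ ?_
        · refine le_trans hb ?_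
          have e1 : (i ! : ℝ) ≤ (j ! : ℝ) := by
            exact_mod_cast Nat.factorial_le (by omega : i ≤ j)
          have e2 : DN ^ i ≤ DN ^ j := pow_le_pow_right₀ hDN1 (by omega)
          calc (i ! : ℝ) * CΦ * DN ^ i ≤ (i ! : ℝ) * CΦ * DN ^ j :=
              mul_le_mul_of_nonneg_left e2 (by positivity)
          _ ≤ (j ! : ℝ) * CΦ * DN ^ j := by
              apply mul_le_mul_of_nonneg_right _ (by positivity)
              exact mul_le_mul_of_nonneg_right e1 hCΦ0
        · intro t ht
          rw [← iteratedDeriv_succ']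
          exact hCΦ (t+1) (by omega) (by omega) _
        · intro t h1 h2
          calc |iteratedDeriv t h x| ≤ N := hNb t h1 (by omega) x
          _ ≤ DN := le_max_right _ _
          _ ≤ DN ^ t := le_self_pow₀ hDN1 (by omega)
      -- bounds on derivatives of Φ ∘ h of orders 1..j
      have hΦhb : ∀ s, 1 ≤ s → s ≤ j → ∀ x,
          |iteratedDeriv s (fun y => Φ (h y)) x|
            ≤ 2^j * ((j ! : ℝ) * CΦ * DN ^ j) * N := by
        intro s h1 h2 x
        obtain ⟨t, rfl⟩ : ∃ t, s = t + 1 := ⟨s - 1, by omega⟩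
        have hder : deriv (fun y => Φ (h y))
            = fun y => (fun z => deriv Φ (h z)) y * (fun z => deriv h z) y := by
          funext y
          exact (((Pf.hPsi.differentiable (by exact_mod_cast (show m ≠ 0 by omega)) (h y)).hasDerivAt).comp y
            ((hhd y).hasDerivAt)).deriv
        rw [iteratedDeriv_succ', hder]
        have hf1 : ContDiff ℝ ((m-1:ℕ)) (fun y => deriv Φ (h y)) := hΦ'.comp hCm1
        have hf2 : ContDiff ℝ ((m-1:ℕ)) (fun y => deriv h y) := hdH.of_le hm1le
        refine le_trans (my_mul_bound hf1 hf2 (by omega : t ≤ m - 1) x) ?_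
        have hsummand : ∀ i ∈ Finset.range (t+1),
            (t.choose i : ℝ) * |iteratedDeriv i (fun y => deriv Φ (h y)) x|
              * |iteratedDeriv (t-i) (fun y => deriv h y) x|
            ≤ (t.choose i : ℝ) * (((j ! : ℝ) * CΦ * DN ^ j) * N) := by
          intro i hi
          rw [Finset.mem_range] at hi
          have e1 := hΦ'h i (by omega) x
          have e2 : |iteratedDeriv (t-i) (fun y => deriv h y) x| ≤ N := by
            have hfn2 : (fun y => deriv h y) = deriv h := rfl
            rw [hfn2, ← iteratedDeriv_succ']
            exact hNb (t-i+1) (by omega) (by omega) x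
          rw [mul_assoc]
          apply mul_le_mul_of_nonneg_left _ (by positivity)
          exact mul_le_mul e1 e2 (abs_nonneg _) (by positivity)
        refine le_trans (Finset.sum_le_sum hsummand) ?_
        rw [← Finset.sum_mul]
        have hchoose : ∑ i ∈ Finset.range (t+1), (t.choose i : ℝ) = 2^t := by
          rw [← Nat.cast_sum, Nat.sum_range_choose]
          push_cast
          ring
        rw [hchoose]
        have e3 : (2:ℝ)^t ≤ 2^j := by
          apply pow_le_pow_right₀ one_le_two (by omega)
        calc (2:ℝ)^t * (((j ! : ℝ) * CΦ * DN ^ j) * N)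
            ≤ 2^j * (((j ! : ℝ) * CΦ * DN ^ j) * N) := by
              apply mul_le_mul_of_nonneg_right e3 (by positivity)
        _ = 2^j * ((j ! : ℝ) * CΦ * DN ^ j) * N := by ring
      -- bound on derivatives of the exponent
      set AW : ℝ := 2^j * ((j ! : ℝ) * CΦ * DN ^ j) * N + CΨ with hAW
      have hwtb : ∀ s, 1 ≤ s → s ≤ j → ∀ x,
          |iteratedDeriv s (fun y => Φ (h y) - Ψ y) x| ≤ AW := by
        intro s h1 h2 x
        have hsle : ((s:ℕ) : WithTop ℕ∞) ≤ ((m:ℕ) : WithTop ℕ∞) := by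
          exact_mod_cast (by omega : s ≤ m)
        have hf1 : ContDiff ℝ (s:ℕ) (fun y => Φ (h y)) :=
          (Pf.hPsi.of_le hsle).comp (hCm.of_le hsle)
        have hf2 : ContDiff ℝ (s:ℕ) Ψ := Pg.hPsi.of_le hsle
        rw [my_itd_sub hf1 hf2 x]
        calc |iteratedDeriv s (fun y => Φ (h y)) x - iteratedDeriv s Ψ x|
            ≤ |iteratedDeriv s (fun y => Φ (h y)) x| + |iteratedDeriv s Ψ x| := abs_sub _ _
        _ ≤ 2^j * ((j ! : ℝ) * CΦ * DN ^ j) * N + CΨ :=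
            add_le_add (hΦhb s h1 h2 x) (hCΨ s h1 (by omega) x)
      set DW : ℝ := max 1 AW with hDW
      have hDW1 : (1:ℝ) ≤ DW := le_max_left _ _
      -- final bound at order j+1
      have hwt : ContDiff ℝ (m:ℕ) (fun y => Φ (h y) - Ψ y) :=
        ((Pf.hPsi).comp hCm).sub Pg.hPsi
      have hfinal : ∀ x, |iteratedDeriv (j+1) h x|
          ≤ c0 * ((j ! : ℝ) * (C / c0) * DW ^ j) := by
        intro x
        rw [iteratedDeriv_succ', hdh]
        have hrw : (fun x => c0 * Real.exp (Φ (h x) - Ψ x))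
            = fun y => c0 * (Real.exp ∘ (fun z => Φ (h z) - Ψ z)) y := rfl
        rw [hrw, my_itd_const_mul (Real.contDiff_exp.comp (hwt.of_le
          (by exact_mod_cast (by omega : j ≤ m)))) c0 x, abs_mul, abs_of_pos hc0pos]
        apply mul_le_mul_of_nonneg_left _ hc0pos.le
        apply my_comp_bound (N := m) Real.contDiff_exp hwt
          (by omega : j ≤ m) x (C := C / c0) (D := DW)
        · intro i _
          rw [my_iteratedDeriv_exp, abs_of_pos (Real.exp_pos _)]
          have hx1 : deriv h x = c0 * Real.exp (Φ (h x) - Ψ x) := by rw [hdh]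
          have hx2 : Real.exp (Φ (h x) - Ψ x) = deriv h x / c0 := by
            rw [hx1]
            field_simp
          rw [hx2]
          gcongr
          exact (hh' x).2
        · intro i h1 h2
          calc |iteratedDeriv i (fun y => Φ (h y) - Ψ y) x| ≤ AW := hwtb i h1 h2 x
          _ ≤ DW := le_max_right _ _
          _ ≤ DW ^ i := le_self_pow₀ hDW1 (by omega)
      refine ⟨max N (max 1 (c0 * ((j ! : ℝ) * (C / c0) * DW ^ j))), ?_, ?_⟩
      · exact le_trans (le_max_left 1 _) (le_max_right N _)
      · intro i h1 h2 x
        rcases Nat.lt_or_ge i (j+1) with hi | hi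
        · exact le_trans (hNb i h1 (by omega) x) (le_max_left _ _)
        · have hi' : i = j + 1 := by omega
          subst hi'
          exact le_trans (hfinal x) (le_trans (le_max_right 1 _) (le_max_right N _))
  intro j h1 h2
  obtain ⟨N, _, hNb⟩ := hmain j h1 h2
  exact ⟨N, fun x => hNb j h1 le_rfl x⟩
end

section
/- Uniqueness of dynamical densities (one-dimensional case). Let g : ℝ → ℝ be a C¹ diffeomorphism with μ ≤ g′(x) ≤ K for all x, where μ > 1 and K > 0. Suppose ρ : ℝ × ℝ → ℝ satisfies: (1) ρ(x, x) = 1 for all x; (2) for every R > 0 and ε > 0 there exists δ > 0 such that for all x and all y, y′ ∈ [x − R, x + R] with |y − y′| ≤ δ one has |ρ(x, y) − ρ(x, y′)| ≤ ε; and (3) ρ(g(x), g(y)) = (g′(x)/g′(y))·ρ(x, y) for all x, y ∈ ℝ. Then ρ(x, y) = ∏_{n≥1} g′(g^{-n}(x)) / g′(g^{-n}(y)) for all x, y ∈ ℝ; in particular any two functions satisfying (1)–(3) coincide. -/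
open Filter

/-- Uniqueness of dynamical densities in the one-dimensional case: any family
`ρ(x, ·)` which is normalized, equicontinuous on balls of any fixed radius, and
transforms correctly under `g` must coincide with the telescopic product
`∏_{n ≥ 1} g′(g^{-n}(x)) / g′(g^{-n}(y))`. -/
theorem dynamical_densities_unique (μ K : ℝ) (hμ : 1 < μ) (hK : 0 < K)
    (g : ℝ → ℝ) (hg : ContDiff ℝ 1 g) (hgb : Function.Bijective g)
    (hg' : ∀ x, μ ≤ deriv g x ∧ deriv g x ≤ K)
    (ρ : ℝ → ℝ → ℝ)
    (h1 : ∀ x, ρ x x = 1)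
    (h2 : ∀ R > (0 : ℝ), ∀ ε > (0 : ℝ), ∃ δ > (0 : ℝ), ∀ x y y' : ℝ,
      y ∈ Set.Icc (x - R) (x + R) → y' ∈ Set.Icc (x - R) (x + R) →
      |y - y'| ≤ δ → |ρ x y - ρ x y'| ≤ ε)
    (h3 : ∀ x y, ρ (g x) (g y) = (deriv g x / deriv g y) * ρ x y) :
    ∀ x y : ℝ, Tendsto (fun N => ∏ n ∈ Finset.range N,
        deriv g ((Function.invFun g)^[n + 1] x) /
          deriv g ((Function.invFun g)^[n + 1] y))
      atTop (nhds (ρ x y)) := by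
  intro x y
  set h := Function.invFun g with hh
  have hμ0 : (0:ℝ) < μ := lt_trans one_pos hμ
  have hgdiff : Differentiable ℝ g := hg.differentiable one_ne_zero
  have hgh : ∀ z, g (h z) = z := fun z => Function.rightInverse_invFun hgb.surjective z
  have hd_pos : ∀ z, 0 < deriv g z := fun z => lt_of_lt_of_le hμ0 (hg' z).1
  -- expansion property of g
  have mono : Monotone (fun z => g z - μ * z) := by
    apply monotone_of_deriv_nonneg
    · exact hgdiff.sub (differentiable_id.const_mul μ)
    · intro z
      have hd : HasDerivAt (fun z => g z - μ * z) (deriv g z - μ * 1) z :=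
        (hgdiff z).hasDerivAt.sub ((hasDerivAt_id z).const_mul μ)
      rw [hd.deriv]
      linarith [(hg' z).1]
  have hexp : ∀ u v, μ * |u - v| ≤ |g u - g v| := by
    intro u v
    rcases le_total u v with huv | huv
    · have h1 := mono huv
      simp only at h1
      have h2 : μ * (v - u) ≤ g v - g u := by linarith
      rw [abs_sub_comm u v, abs_sub_comm (g u) (g v),
        abs_of_nonneg (by linarith), abs_of_nonneg (by nlinarith)]
      linarith
    · have h1 := mono huv
      simp only at h1
      have h2 : μ * (u - v) ≤ g u - g v := by linarith
      rw [abs_of_nonneg (by linarith), abs_of_nonneg (by nlinarith)]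
      linarith
  -- contraction of h
  have hcontr : ∀ a b, |h a - h b| ≤ |a - b| / μ := by
    intro a b
    have := hexp (h a) (h b)
    rw [hgh, hgh] at this
    rw [le_div_iff₀ hμ0]
    linarith
  have hiter : ∀ N : ℕ, |h^[N] x - h^[N] y| ≤ |x - y| / μ ^ N := by
    intro N
    induction N with
    | zero => simp
    | succ n ih =>
      rw [Function.iterate_succ_apply', Function.iterate_succ_apply']
      calc |h (h^[n] x) - h (h^[n] y)| ≤ |h^[n] x - h^[n] y| / μ := hcontr _ _
        _ ≤ (|x - y| / μ ^ n) / μ := by gcongr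
        _ = |x - y| / μ ^ (n + 1) := by rw [div_div, pow_succ]
  -- key telescoping identity
  have key : ∀ N : ℕ, ρ x y = (∏ n ∈ Finset.range N,
      deriv g (h^[n + 1] x) / deriv g (h^[n + 1] y)) * ρ (h^[N] x) (h^[N] y) := by
    intro N
    induction N with
    | zero => simp
    | succ n ih =>
      have hcol : ∀ z, g (h^[n + 1] z) = h^[n] z := by
        intro z
        rw [Function.iterate_succ_apply' h n z, hgh]
      have hstep := h3 (h^[n + 1] x) (h^[n + 1] y)
      rw [hcol, hcol] at hstep
      rw [Finset.prod_range_succ, ih, hstep]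
      ring
  set a : ℕ → ℝ := fun N => ρ (h^[N] x) (h^[N] y) with ha_def
  -- a N → 1
  have ha : Tendsto a atTop (nhds 1) := by
    rw [Metric.tendsto_atTop]
    intro ε hε
    obtain ⟨δ, hδ0, hδ⟩ := h2 (|x - y| + 1) (by positivity) (ε / 2) (by linarith)
    have hlim : Tendsto (fun n : ℕ => |x - y| / μ ^ n) atTop (nhds 0) := by
      have : Tendsto (fun n : ℕ => |x - y| * (1 / μ) ^ n) atTop (nhds (|x - y| * 0)) := by
        apply Tendsto.const_mul
        apply tendsto_pow_atTop_nhds_zero_of_lt_one (by positivity)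
        rw [div_lt_one hμ0]; linarith
      simpa [div_pow, div_eq_mul_inv] using this
    obtain ⟨N, hN⟩ := (hlim.eventually (eventually_le_nhds hδ0)).exists_forall_of_atTop
    refine ⟨N, fun n hn => ?_⟩
    have hmem : h^[n] y ∈ Set.Icc (h^[n] x - (|x - y| + 1)) (h^[n] x + (|x - y| + 1)) := by
      have h1 : |h^[n] x - h^[n] y| ≤ |x - y| := by
        refine (hiter n).trans ?_
        rw [div_le_iff₀ (by positivity)]
        nlinarith [one_le_pow₀ hμ.le (n := n), abs_nonneg (x - y)]
      rw [abs_le] at h1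
      constructor <;> linarith
    have hmem' : h^[n] x ∈ Set.Icc (h^[n] x - (|x - y| + 1)) (h^[n] x + (|x - y| + 1)) := by
      constructor <;> nlinarith [abs_nonneg (x - y)]
    have hb := hδ (h^[n] x) (h^[n] y) (h^[n] x) hmem hmem' (by
      rw [abs_sub_comm]; exact (hiter n).trans (hN n hn))
    rw [h1 (h^[n] x)] at hb
    rw [Real.dist_eq]
    calc |a n - 1| = |ρ (h^[n] x) (h^[n] y) - 1| := rfl
      _ ≤ ε / 2 := hb
      _ < ε := by linarith
  -- conclude
  have hne : ∀ᶠ N in atTop, a N ≠ 0 := ha.eventually (eventually_ne_nhds one_ne_zero)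
  have heq : ∀ᶠ N in atTop, ρ x y / a N = ∏ n ∈ Finset.range N,
      deriv g (h^[n + 1] x) / deriv g (h^[n + 1] y) := by
    filter_upwards [hne] with N hN
    rw [key N, mul_div_assoc, div_self hN, mul_one]
  have : Tendsto (fun N => ρ x y / a N) atTop (nhds (ρ x y / 1)) :=
    Tendsto.div tendsto_const_nhds ha one_ne_zero
  rw [div_one] at this
  exact this.congr' heq
end
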